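/- arXiv:2502.14680 — 2 statements merged into one kernel-verified Lean document; each statement's English description precedes it below -/
import Mathlib

section
/- Let b > 1, j,m ≥ 0 be integers, 0 < κ ≤ 1, and let X_{j+m} be a maximal (γ b^{-(j+m)})-net on the unit sphere S^{d-1} for some fixed γ > 0. Then for every x on the sphere, ∑_{η ∈ X_{j+m}} (1 + b^j ρ(x,η))^{-(d-1+κ)} ≤ c · b^{m(d-1)}, where c = c(d,b,γ)·κ^{-1}. -/
open MeasureTheory Real
open scoped ENNReal
set_option maxHeartbeats 2000000

/-- Geodesic distance on the unit sphere `S^{d-1}`: `ρ(x,y) = arccos (x·y)`. -/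
noncomputable def gdist {d : ℕ} (x y : Metric.sphere (0 : EuclideanSpace ℝ (Fin d)) 1) : ℝ :=
  Real.arccos (inner ℝ (x : EuclideanSpace ℝ (Fin d)) (y : EuclideanSpace ℝ (Fin d)))

/-- The surface (Lebesgue) measure on `S^{d-1}`, realized as the `(d-1)`-dimensional
Hausdorff measure. -/
noncomputable def smeasure (d : ℕ) :
    Measure (Metric.sphere (0 : EuclideanSpace ℝ (Fin d)) 1) :=
  Measure.hausdorffMeasure ((d : ℝ) - 1)

/-- The spherical cap (geodesic ball) `B(η,r)` on `S^{d-1}`. -/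
def sball {d : ℕ} (η : Metric.sphere (0 : EuclideanSpace ℝ (Fin d)) 1) (r : ℝ) :
    Set (Metric.sphere (0 : EuclideanSpace ℝ (Fin d)) 1) :=
  {x | gdist η x < r}

/-- `Z` is a maximal `δ`-net on `S^{d-1}`: a finite set with pairwise geodesic distances
`≥ δ` whose geodesic `δ`-balls cover the sphere. -/
def IsMaximalNet {d : ℕ} (δ : ℝ) (Z : Finset (Metric.sphere (0 : EuclideanSpace ℝ (Fin d)) 1)) : Prop :=
  (∀ ζ₁ ∈ Z, ∀ ζ₂ ∈ Z, ζ₁ ≠ ζ₂ → δ ≤ gdist ζ₁ ζ₂) ∧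
  (∀ x : Metric.sphere (0 : EuclideanSpace ℝ (Fin d)) 1, ∃ ζ ∈ Z, gdist ζ x < δ)

section NetAux

variable {d : ℕ}

local notation "E'" => EuclideanSpace ℝ (Fin d)
local notation "S'" => Metric.sphere (0 : EuclideanSpace ℝ (Fin d)) 1

private lemma le_of_sq_le_sq'' {a b : ℝ} (ha : 0 ≤ a) (hb : 0 ≤ b) (h : a ^ 2 ≤ b ^ 2) :
    a ≤ b := by nlinarith

private lemma eq_of_sq_eq {a b : ℝ} (ha : 0 ≤ a) (hb : 0 ≤ b) (h : a ^ 2 = b ^ 2) : a = b :=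
  le_antisymm (le_of_sq_le_sq'' ha hb h.le) (le_of_sq_le_sq'' hb ha h.ge)

set_option maxHeartbeats 1000000 in
private lemma real_chart_ineq {X a c u v D : ℝ}
    (e0 : X ^ 2 = (a - c) ^ 2 + D ^ 2) (e1 : u ^ 2 = 1 - a ^ 2) (e2 : v ^ 2 = 1 - c ^ 2)
    (ha : 1 / 2 ≤ a) (hc : 1 / 2 ≤ c)
    (hX : 0 ≤ X) (hu : 0 ≤ u) (hv : 0 ≤ v) (hD : 0 ≤ D)
    (habs1 : v - u ≤ D) (habs2 : -D ≤ v - u) : X ≤ 3 * D := by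
  have ha1 : a ≤ 1 := by nlinarith [e1, sq_nonneg u]
  have hc1 : c ≤ 1 := by nlinarith [e2, sq_nonneg v]
  have hu1 : u ≤ 1 := by nlinarith [e1, sq_nonneg a]
  have hv1 : v ≤ 1 := by nlinarith [e2, sq_nonneg c]
  have h5 : (a - c) * (a + c) = (v - u) * (v + u) := by linear_combination e1 - e2
  have hac2 : (1:ℝ) ≤ (a + c) ^ 2 := by nlinarith [ha, hc]
  have h8 : (v - u) ^ 2 ≤ D ^ 2 := by nlinarith [habs1, habs2]
  have h9 : (v + u) ^ 2 ≤ 4 := by nlinarith [hu1, hv1, hu, hv]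
  have key : (a - c) ^ 2 ≤ 4 * D ^ 2 := by
    have hle : (a - c) ^ 2 ≤ (a - c) ^ 2 * (a + c) ^ 2 := by
      nlinarith [mul_nonneg (sq_nonneg (a - c)) (by linarith : (0:ℝ) ≤ (a + c) ^ 2 - 1)]
    have h7 : (a - c) ^ 2 * (a + c) ^ 2 = (v - u) ^ 2 * (v + u) ^ 2 := by
      rw [← mul_pow, ← mul_pow, h5]
    have h10 : (v - u) ^ 2 * (v + u) ^ 2 ≤ D ^ 2 * 4 :=
      mul_le_mul h8 h9 (sq_nonneg _) (sq_nonneg _)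
    nlinarith [hle, h7, h10]
  apply le_of_sq_le_sq'' hX (by linarith)
  nlinarith [e0, key]

private lemma sphere_norm (x : S') : ‖(x : E')‖ = 1 :=
  mem_sphere_zero_iff_norm.mp x.2

private lemma sphere_inner_le (x y : S') : (inner ℝ (x : E') (y : E') : ℝ) ≤ 1 := by
  have h := abs_real_inner_le_norm (x : E') (y : E')
  rw [sphere_norm, sphere_norm, mul_one] at h
  exact (abs_le.mp h).2

private lemma sphere_inner_ge (x y : S') : (-1 : ℝ) ≤ (inner ℝ (x : E') (y : E') : ℝ) := by
  have h := abs_real_inner_le_norm (x : E') (y : E')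
  rw [sphere_norm, sphere_norm, mul_one] at h
  exact (abs_le.mp h).1

private lemma cos_gdist (x y : S') :
    Real.cos (gdist x y) = (inner ℝ (x : E') (y : E') : ℝ) :=
  Real.cos_arccos (sphere_inner_ge x y) (sphere_inner_le x y)

private lemma gdist_nonneg' (x y : S') : 0 ≤ gdist x y := Real.arccos_nonneg _

private lemma gdist_le_pi' (x y : S') : gdist x y ≤ π := Real.arccos_le_pi _

private lemma sin_half_nonneg (x y : S') : 0 ≤ Real.sin (gdist x y / 2) := by
  have h1 := gdist_nonneg' x y
  have h2 := gdist_le_pi' x y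
  have hπ := Real.pi_pos
  exact Real.sin_nonneg_of_nonneg_of_le_pi (by linarith) (by linarith)

private lemma dist_coe_eq (x y : S') :
    ‖(x : E') - (y : E')‖ = 2 * Real.sin (gdist x y / 2) := by
  have h1 : ‖(x : E') - (y : E')‖ ^ 2 = 2 - 2 * (inner ℝ (x : E') (y : E') : ℝ) := by
    rw [norm_sub_sq_real, sphere_norm, sphere_norm]; ring
  have h2 : Real.sin (gdist x y / 2) ^ 2 = 1 / 2 - Real.cos (gdist x y) / 2 := by
    have h := Real.sin_sq_eq_half_sub (gdist x y / 2)
    have h3 : 2 * (gdist x y / 2) = gdist x y := by ring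
    rwa [h3] at h
  have hsq : ‖(x : E') - (y : E')‖ ^ 2 = (2 * Real.sin (gdist x y / 2)) ^ 2 := by
    rw [h1, ← cos_gdist x y]; nlinarith [h2]
  exact eq_of_sq_eq (norm_nonneg _) (by linarith [sin_half_nonneg x y]) hsq

private lemma dist_le_gdist (x y : S') : dist x y ≤ gdist x y := by
  rw [Subtype.dist_eq, dist_eq_norm, dist_coe_eq]
  have habs := Real.abs_sin_le_abs (x := gdist x y / 2)
  rw [abs_of_nonneg (sin_half_nonneg x y),
    abs_of_nonneg (by linarith [gdist_nonneg' x y] : (0:ℝ) ≤ gdist x y / 2)] at habs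
  linarith

private lemma gdist_le_two_dist (x y : S') : gdist x y ≤ 2 * dist x y := by
  rw [Subtype.dist_eq, dist_eq_norm, dist_coe_eq]
  have h0 := gdist_nonneg' x y
  have hπ := Real.pi_pos
  have h4 := Real.mul_le_sin (x := gdist x y / 2) (by linarith)
    (by linarith [gdist_le_pi' x y])
  have h5 : 2 / π * (gdist x y / 2) = gdist x y / π := by ring
  rw [h5] at h4
  have h6 : gdist x y / 4 ≤ gdist x y / π := by
    apply div_le_div_of_nonneg_left h0 hπ Real.pi_le_four
  linarith

private lemma inner_self_one (p : S') : (inner ℝ (p : E') (p : E') : ℝ) = 1 := by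
  rw [real_inner_self_eq_norm_sq, sphere_norm]; norm_num

private lemma chart_wnorm (p x : S') :
    ‖(x : E') - (inner ℝ (p : E') (x : E') : ℝ) • (p : E')‖ ^ 2
      = 1 - (inner ℝ (p : E') (x : E') : ℝ) ^ 2 := by
  rw [norm_sub_sq_real, sphere_norm, norm_smul, sphere_norm, real_inner_smul_right,
    real_inner_comm (x : E') (p : E')]
  simp only [Real.norm_eq_abs, mul_one, one_pow]
  rw [sq_abs]
  ring

private lemma chart_decomp (p x y : S') :
    ‖(x : E') - (y : E')‖ ^ 2
      = ((inner ℝ (p : E') (x : E') : ℝ) - (inner ℝ (p : E') (y : E') : ℝ)) ^ 2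
        + ‖((x : E') - (inner ℝ (p : E') (x : E') : ℝ) • (p : E'))
            - ((y : E') - (inner ℝ (p : E') (y : E') : ℝ) • (p : E'))‖ ^ 2 := by
  set a : ℝ := inner ℝ (p : E') (x : E') with ha
  set c : ℝ := inner ℝ (p : E') (y : E') with hc
  set W : E' := ((x : E') - a • (p : E')) - ((y : E') - c • (p : E')) with hW
  have hpW : (inner ℝ (p : E') W : ℝ) = 0 := by
    rw [hW, inner_sub_right, inner_sub_right, inner_sub_right, real_inner_smul_right,
      real_inner_smul_right, inner_self_one]
    ring
  have hdecomp : (x : E') - (y : E') = (a - c) • (p : E') + W := by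
    rw [hW, sub_smul]; abel
  rw [hdecomp, norm_add_sq_real, real_inner_smul_left, hpW, norm_smul, sphere_norm,
    Real.norm_eq_abs, mul_one, sq_abs]
  ring

private lemma chart_contract (p x y : S') :
    ‖((x : E') - (inner ℝ (p : E') (x : E') : ℝ) • (p : E'))
        - ((y : E') - (inner ℝ (p : E') (y : E') : ℝ) • (p : E'))‖
      ≤ ‖(x : E') - (y : E')‖ := by
  have h := chart_decomp p x y
  apply le_of_sq_le_sq'' (norm_nonneg _) (norm_nonneg _)
  nlinarith [h, sq_nonneg ((inner ℝ (p : E') (x : E') : ℝ) - (inner ℝ (p : E') (y : E') : ℝ))]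

private lemma chart_key (p x y : S')
    (hx : (1 : ℝ) / 2 ≤ (inner ℝ (p : E') (x : E') : ℝ))
    (hy : (1 : ℝ) / 2 ≤ (inner ℝ (p : E') (y : E') : ℝ)) :
    ‖(x : E') - (y : E')‖
      ≤ 3 * ‖((x : E') - (inner ℝ (p : E') (x : E') : ℝ) • (p : E'))
          - ((y : E') - (inner ℝ (p : E') (y : E') : ℝ) • (p : E'))‖ := by
  have e0 := chart_decomp p x y
  have e1 := chart_wnorm p x
  have e2 := chart_wnorm p y
  have habs := abs_norm_sub_norm_le
    ((x : E') - (inner ℝ (p : E') (x : E') : ℝ) • (p : E'))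
    ((y : E') - (inner ℝ (p : E') (y : E') : ℝ) • (p : E'))
  have h1 := (abs_le.mp habs).1
  have h2 := (abs_le.mp habs).2
  exact real_chart_ineq e0 e1 e2 hx hy (norm_nonneg _) (norm_nonneg _) (norm_nonneg _)
    (norm_nonneg _) (by linarith) (by linarith)

private lemma exists_cover (d : ℕ) :
    ∃ P : Finset (Metric.sphere (0 : EuclideanSpace ℝ (Fin d)) 1),
      ∀ x : Metric.sphere (0 : EuclideanSpace ℝ (Fin d)) 1,
        ∃ p ∈ P, (1 : ℝ) / 2 ≤ (inner ℝ (p : EuclideanSpace ℝ (Fin d))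
          (x : EuclideanSpace ℝ (Fin d)) : ℝ) := by
  obtain ⟨P, hP⟩ := (isCompact_sphere (0 : EuclideanSpace ℝ (Fin d)) 1).elim_finite_subcover
    (fun p : Metric.sphere (0 : EuclideanSpace ℝ (Fin d)) 1 =>
      {y : EuclideanSpace ℝ (Fin d) |
        (1 : ℝ) / 2 < (inner ℝ (p : EuclideanSpace ℝ (Fin d)) y : ℝ)})
    (fun p => isOpen_lt continuous_const (Continuous.inner continuous_const continuous_id))
    (fun y hy => Set.mem_iUnion.mpr ⟨⟨y, hy⟩, by
      simp only [Set.mem_setOf_eq]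
      have h1 : (inner ℝ y y : ℝ) = 1 := by
        rw [real_inner_self_eq_norm_sq, mem_sphere_zero_iff_norm.mp hy]; norm_num
      rw [h1]; norm_num⟩)
  refine ⟨P, fun x => ?_⟩
  have hx := hP x.2
  rw [Set.mem_iUnion₂] at hx
  obtain ⟨p, hpP, hpx⟩ := hx
  exact ⟨p, hpP, le_of_lt hpx⟩

private lemma euclidean_packing {n : ℕ} (hn : 0 < n)
    (T : Finset (EuclideanSpace ℝ (Fin n))) {s R : ℝ} (hs : 0 < s) (hR : 0 ≤ R)
    (x₀ : EuclideanSpace ℝ (Fin n))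
    (hsep : ∀ a ∈ T, ∀ c ∈ T, a ≠ c → s ≤ dist a c)
    (hsub : ∀ a ∈ T, dist a x₀ < R) :
    (T.card : ℝ) * (s / 2) ^ n ≤ (R + s / 2) ^ n := by
  haveI : Nonempty (Fin n) := Fin.pos_iff_nonempty.mp hn
  have hd : (↑T : Set (EuclideanSpace ℝ (Fin n))).PairwiseDisjoint
      fun a => Metric.ball a (s / 2) := by
    intro a ha c hc hac
    exact Metric.ball_disjoint_ball (by linarith [hsep a ha c hc hac])
  have hunion : (⋃ a ∈ T, Metric.ball a (s / 2)) ⊆ Metric.ball x₀ (R + s / 2) := by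
    intro z hz
    simp only [Set.mem_iUnion] at hz
    obtain ⟨a, ha, hza⟩ := hz
    rw [Metric.mem_ball] at hza ⊢
    have h1 := hsub a ha
    calc dist z x₀ ≤ dist z a + dist a x₀ := dist_triangle _ _ _
      _ < s / 2 + R := by linarith
      _ = R + s / 2 := by ring
  have key : ∑ a ∈ T, volume (Metric.ball a (s / 2)) ≤ volume (Metric.ball x₀ (R + s / 2)) := by
    rw [← measure_biUnion_finset hd (fun a _ => measurableSet_ball)]
    exact measure_mono hunion
  have hball : ∀ a : EuclideanSpace ℝ (Fin n), volume (Metric.ball a (s / 2))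
      = ENNReal.ofReal ((s / 2) ^ n) * volume (Metric.ball (0 : EuclideanSpace ℝ (Fin n)) 1) := by
    intro a
    have h := Measure.addHaar_ball volume a (le_of_lt (half_pos hs))
    rwa [finrank_euclideanSpace_fin] at h
  have hball2 : volume (Metric.ball x₀ (R + s / 2))
      = ENNReal.ofReal ((R + s / 2) ^ n) * volume (Metric.ball (0 : EuclideanSpace ℝ (Fin n)) 1) := by
    have h := Measure.addHaar_ball volume x₀ (by positivity : (0:ℝ) ≤ R + s / 2)
    rwa [finrank_euclideanSpace_fin] at h
  set V := volume (Metric.ball (0 : EuclideanSpace ℝ (Fin n)) 1) with hV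
  have hV0 : V ≠ 0 := (Metric.measure_ball_pos volume 0 one_pos).ne'
  have hVtop : V ≠ ⊤ := measure_ball_lt_top.ne
  have key2 : (T.card : ℝ≥0∞) * ENNReal.ofReal ((s / 2) ^ n)
      ≤ ENNReal.ofReal ((R + s / 2) ^ n) := by
    rw [← ENNReal.mul_le_mul_iff_left hV0 hVtop, mul_assoc]
    calc (T.card : ℝ≥0∞) * (ENNReal.ofReal ((s / 2) ^ n) * V)
        = ∑ a ∈ T, volume (Metric.ball a (s / 2)) := by
          rw [Finset.sum_congr rfl (fun a _ => hball a), Finset.sum_const, nsmul_eq_mul]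
      _ ≤ volume (Metric.ball x₀ (R + s / 2)) := key
      _ = ENNReal.ofReal ((R + s / 2) ^ n) * V := hball2
  rw [← ENNReal.ofReal_natCast, ← ENNReal.ofReal_mul (Nat.cast_nonneg _)] at key2
  exact (ENNReal.ofReal_le_ofReal_iff (by positivity)).mp key2

private lemma sphere_count (hd : 2 ≤ d)
    (P : Finset S')
    (hP : ∀ x : S', ∃ p ∈ P, (1 : ℝ) / 2 ≤ (inner ℝ (p : E') (x : E') : ℝ))
    (T : Finset S') {s r : ℝ} (hs : 0 < s) (hr : 0 ≤ r) (x : S')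
    (hsep : ∀ a ∈ T, ∀ c ∈ T, a ≠ c → s ≤ dist a c)
    (hball : ∀ a ∈ T, dist a x ≤ r) :
    (T.card : ℝ) ≤ P.card * (12 * r / s + 7) ^ (d - 1) := by
  classical
  haveI : Fact (Module.finrank ℝ E' = (d - 1) + 1) :=
    ⟨by rw [finrank_euclideanSpace_fin]; omega⟩
  have hbase : (0 : ℝ) < 12 * r / s + 7 := by positivity
  have hsubset : T ⊆ P.biUnion
      (fun p => T.filter (fun η : S' => (1 : ℝ) / 2 ≤ (inner ℝ (p : E') (η : E') : ℝ))) := by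
    intro η hη
    obtain ⟨p, hp, hpη⟩ := hP η
    exact Finset.mem_biUnion.mpr ⟨p, hp, Finset.mem_filter.mpr ⟨hη, hpη⟩⟩
  have hcard : T.card ≤ ∑ p ∈ P,
      (T.filter (fun η : S' => (1 : ℝ) / 2 ≤ (inner ℝ (p : E') (η : E') : ℝ))).card :=
    le_trans (Finset.card_le_card hsubset) Finset.card_biUnion_le
  have hpiece : ∀ p ∈ P,
      ((T.filter (fun η : S' => (1 : ℝ) / 2 ≤ (inner ℝ (p : E') (η : E') : ℝ))).card : ℝ)
        ≤ (12 * r / s + 7) ^ (d - 1) := by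
    intro p _
    set Tp := T.filter (fun η : S' => (1 : ℝ) / 2 ≤ (inner ℝ (p : E') (η : E') : ℝ)) with hTp
    rcases Finset.eq_empty_or_nonempty Tp with hemp | ⟨η₀, hη₀⟩
    · rw [hemp]
      simp only [Finset.card_empty, Nat.cast_zero]
      positivity
    have hη₀T : η₀ ∈ T := (Finset.mem_filter.mp hη₀).1
    have hp0 : (p : E') ≠ 0 := by
      intro h
      have h2 := sphere_norm p
      rw [h, norm_zero] at h2
      norm_num at h2
    set B := OrthonormalBasis.fromOrthogonalSpanSingleton (𝕜 := ℝ) (d - 1) hp0 with hB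
    have hmem : ∀ z : S',
        (z : E') - (inner ℝ (p : E') (z : E') : ℝ) • (p : E') ∈ (ℝ ∙ (p : E'))ᗮ := by
      intro z
      rw [Submodule.mem_orthogonal_singleton_iff_inner_right, inner_sub_right,
        real_inner_smul_right, inner_self_one]
      ring
    set G : S' → EuclideanSpace ℝ (Fin (d - 1)) :=
      fun z => B.repr ⟨(z : E') - (inner ℝ (p : E') (z : E') : ℝ) • (p : E'), hmem z⟩ with hG
    have hGdist : ∀ z z' : S', dist (G z) (G z')
        = ‖((z : E') - (inner ℝ (p : E') (z : E') : ℝ) • (p : E'))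
            - ((z' : E') - (inner ℝ (p : E') (z' : E') : ℝ) • (p : E'))‖ := by
      intro z z'
      rw [hG]
      rw [B.repr.dist_map, dist_eq_norm, Submodule.coe_norm, AddSubgroupClass.coe_sub]
    have himgsep : ∀ z ∈ Tp, ∀ z' ∈ Tp, z ≠ z' → s / 3 ≤ dist (G z) (G z') := by
      intro z hz z' hz' hne
      have hz1 := Finset.mem_filter.mp hz
      have hz'1 := Finset.mem_filter.mp hz'
      have h1 := chart_key p z z' hz1.2 hz'1.2
      have h2 : s ≤ dist z z' := hsep z hz1.1 z' hz'1.1 hne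
      rw [Subtype.dist_eq, dist_eq_norm] at h2
      rw [hGdist]
      linarith
    have hinj : Set.InjOn G ↑Tp := by
      intro z hz z' hz' hGe
      by_contra hne
      have h := himgsep z (Finset.mem_coe.mp hz) z' (Finset.mem_coe.mp hz') hne
      rw [hGe, dist_self] at h
      linarith
    set T' := Tp.image G with hT'
    have hcard' : T'.card = Tp.card := Finset.card_image_of_injOn hinj
    have hn1 : 0 < d - 1 := by omega
    have hsub' : ∀ a ∈ T', dist a (G η₀) < 2 * r + s := by
      intro a ha
      obtain ⟨z, hz, rfl⟩ := Finset.mem_image.mp ha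
      have hz1 := Finset.mem_filter.mp hz
      have h1 : dist (G z) (G η₀) ≤ dist z η₀ := by
        rw [hGdist, Subtype.dist_eq, dist_eq_norm]
        exact chart_contract p z η₀
      have h2 : dist z η₀ ≤ 2 * r := by
        calc dist z η₀ ≤ dist z x + dist η₀ x := dist_triangle_right _ _ _
          _ ≤ r + r := add_le_add (hball z hz1.1) (hball η₀ hη₀T)
          _ = 2 * r := by ring
      linarith
    have hsep' : ∀ a ∈ T', ∀ c ∈ T', a ≠ c → s / 3 ≤ dist a c := by
      intro a ha c hc hac
      obtain ⟨z, hz, rfl⟩ := Finset.mem_image.mp ha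
      obtain ⟨z', hz', rfl⟩ := Finset.mem_image.mp hc
      have hne : z ≠ z' := fun h => hac (by rw [h])
      exact himgsep z hz z' hz' hne
    have hpack := euclidean_packing hn1 T' (by positivity : (0:ℝ) < s / 3)
      (by positivity : (0:ℝ) ≤ 2 * r + s) (G η₀) hsep' hsub'
    have hpow : (0:ℝ) < (s / 3 / 2) ^ (d - 1) := by positivity
    have hq : ((Tp.card : ℝ)) ≤ ((2 * r + s + s / 3 / 2) / (s / 3 / 2)) ^ (d - 1) := by
      rw [div_pow, le_div_iff₀ hpow]
      calc (Tp.card : ℝ) * (s / 3 / 2) ^ (d - 1)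
          = (T'.card : ℝ) * (s / 3 / 2) ^ (d - 1) := by rw [hcard']
        _ ≤ (2 * r + s + s / 3 / 2) ^ (d - 1) := hpack
    have heq : (2 * r + s + s / 3 / 2) / (s / 3 / 2) = 12 * r / s + 7 := by
      field_simp
      ring
    rw [heq] at hq
    exact hq
  calc (T.card : ℝ)
      ≤ ∑ p ∈ P, (((T.filter
          (fun η : S' => (1 : ℝ) / 2 ≤ (inner ℝ (p : E') (η : E') : ℝ))).card : ℝ)) := by
        exact_mod_cast hcard
    _ ≤ ∑ _p ∈ P, (12 * r / s + 7) ^ (d - 1) := Finset.sum_le_sum hpiece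
    _ = P.card * (12 * r / s + 7) ^ (d - 1) := by rw [Finset.sum_const, nsmul_eq_mul]

end NetAux

/-- For `b > 1`, `γ > 0`, `0 < κ ≤ 1`, integers `j, m ≥ 0`, any maximal
`γ b^{-(j+m)}`-net `Z` on `S^{d-1}`, and any `x ∈ S^{d-1}`:
`∑_{η ∈ Z} (1 + b^j ρ(x,η))^{-(d-1+κ)} ≤ c κ⁻¹ b^{m(d-1)}` with `c = c(d,b,γ)`. -/
theorem sum_over_net_bound (d : ℕ) (hd : 2 ≤ d) (b γ : ℝ) (hb : 1 < b) (hγ : 0 < γ) :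
    ∃ c : ℝ, 0 < c ∧
      ∀ κ : ℝ, 0 < κ → κ ≤ 1 → ∀ j m : ℕ,
        ∀ Z : Finset (Metric.sphere (0 : EuclideanSpace ℝ (Fin d)) 1),
          IsMaximalNet (γ / b ^ (j + m)) Z →
          ∀ x : Metric.sphere (0 : EuclideanSpace ℝ (Fin d)) 1,
            ∑ η ∈ Z, (1 + b ^ j * gdist x η) ^ (-((d : ℝ) - 1 + κ))
              ≤ (c / κ) * b ^ (m * (d - 1)) := by
  classical
  obtain ⟨P, hP⟩ := exists_cover d
  have hC₁pos : (0:ℝ) < 24 / γ + 7 := by positivity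
  set C₁ : ℝ := 24 / γ + 7 with hC₁
  refine ⟨((P.card : ℝ) + 1) * (2 * C₁) ^ (d - 1) * 4, by positivity, ?_⟩
  intro κ hκ hκ1 j m Z hZ x
  set n := d - 1 with hn
  have hn1 : 0 < n := by omega
  have hb0 : (0:ℝ) < b := lt_trans one_pos hb
  have hbj : (0:ℝ) < b ^ j := pow_pos hb0 j
  have hbm : (1:ℝ) ≤ b ^ m := one_le_pow₀ hb.le
  set δ : ℝ := γ / b ^ (j + m) with hδdef
  have hδ : 0 < δ := div_pos hγ (pow_pos hb0 _)
  have hsepE : ∀ a ∈ Z, ∀ c ∈ Z, a ≠ c → δ / 2 ≤ dist a c := by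
    intro a ha c hc hac
    have h1 := hZ.1 a ha c hc hac
    have h2 := gdist_le_two_dist a c
    linarith
  have hdcast : ((d : ℝ) - 1) = (n : ℝ) := by
    rw [hn]
    have : ((d - 1 : ℕ) : ℝ) = (d : ℝ) - 1 := by
      rw [Nat.cast_sub (by omega : 1 ≤ d)]; norm_num
    rw [this]
  set fib : Metric.sphere (0 : EuclideanSpace ℝ (Fin d)) 1 → ℕ :=
    fun η => Nat.log 2 (⌊b ^ j * gdist x η⌋₊ + 1) with hfib
  set I := Z.image fib with hI
  set ρ₀ : ℝ := (2:ℝ) ^ (-κ) with hρ₀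
  have hρ₀0 : 0 ≤ ρ₀ := Real.rpow_nonneg (by norm_num) _
  have hρ₀1 : ρ₀ < 1 := Real.rpow_lt_one_of_one_lt_of_neg (by norm_num) (by linarith)
  set K : ℝ := (P.card : ℝ) * (2 * C₁ * b ^ m) ^ n with hK
  have hKpos : 0 ≤ K := by positivity
  have hsum : ∑ η ∈ Z, (1 + b ^ j * gdist x η) ^ (-((d : ℝ) - 1 + κ))
      = ∑ i ∈ I, ∑ η ∈ Z.filter (fun η => fib η = i),
          (1 + b ^ j * gdist x η) ^ (-((d : ℝ) - 1 + κ)) :=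
    (Finset.sum_fiberwise_of_maps_to (fun η hη => Finset.mem_image_of_mem fib hη) _).symm
  have hfiber : ∀ i ∈ I, ∑ η ∈ Z.filter (fun η => fib η = i),
      (1 + b ^ j * gdist x η) ^ (-((d : ℝ) - 1 + κ)) ≤ K * ρ₀ ^ i := by
    intro i _
    set Fi := Z.filter (fun η => fib η = i) with hFi
    have hterm : ∀ η ∈ Fi, (1 + b ^ j * gdist x η) ^ (-((d : ℝ) - 1 + κ))
        ≤ ((2:ℝ) ^ i) ^ (-((n:ℝ) + κ)) := by
      intro η hη
      have hη2 : fib η = i := (Finset.mem_filter.mp hη).2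
      have hρnn : 0 ≤ b ^ j * gdist x η := mul_nonneg hbj.le (gdist_nonneg' x η)
      have hfl : ((⌊b ^ j * gdist x η⌋₊ : ℝ)) ≤ b ^ j * gdist x η := Nat.floor_le hρnn
      have h2i : (2:ℕ) ^ i ≤ ⌊b ^ j * gdist x η⌋₊ + 1 := by
        rw [← hη2, hfib]
        exact Nat.pow_log_le_self 2 (Nat.succ_ne_zero _)
      have h2iR : ((2:ℝ)) ^ i ≤ 1 + b ^ j * gdist x η := by
        calc ((2:ℝ)) ^ i = (((2:ℕ) ^ i : ℕ) : ℝ) := by push_cast; ring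
          _ ≤ ((⌊b ^ j * gdist x η⌋₊ + 1 : ℕ) : ℝ) := by exact_mod_cast h2i
          _ ≤ 1 + b ^ j * gdist x η := by push_cast; linarith
      rw [hdcast]
      have hexp0 : -((n:ℝ) + κ) ≤ 0 := by
        have : (0:ℝ) ≤ (n:ℝ) + κ := by positivity
        linarith
      exact Real.rpow_le_rpow_of_nonpos (by positivity) h2iR hexp0
    have hballF : ∀ η ∈ Fi, dist η x ≤ 2 ^ (i + 1) / b ^ j := by
      intro η hη
      have hη2 : fib η = i := (Finset.mem_filter.mp hη).2
      have h1 : b ^ j * gdist x η < ((⌊b ^ j * gdist x η⌋₊ : ℝ) + 1) :=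
        Nat.lt_floor_add_one _
      have h2 : ⌊b ^ j * gdist x η⌋₊ + 1 < 2 ^ (i + 1) := by
        rw [← hη2, hfib]
        exact Nat.lt_pow_succ_log_self (by norm_num) _
      have h3 : ((⌊b ^ j * gdist x η⌋₊ : ℝ) + 1) ≤ (2:ℝ) ^ (i + 1) := by
        have : ((⌊b ^ j * gdist x η⌋₊ + 1 : ℕ) : ℝ) ≤ (((2:ℕ) ^ (i + 1) : ℕ) : ℝ) := by
          exact_mod_cast h2.le
        push_cast at this
        linarith
      have h4 : b ^ j * gdist x η ≤ (2:ℝ) ^ (i + 1) := by linarith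
      have h5 : gdist x η ≤ (2:ℝ) ^ (i + 1) / b ^ j := by
        rw [le_div_iff₀ hbj]
        linarith [h4, mul_comm (b ^ j) (gdist x η)]
      calc dist η x = dist x η := dist_comm _ _
        _ ≤ gdist x η := dist_le_gdist x η
        _ ≤ (2:ℝ) ^ (i + 1) / b ^ j := h5
    have hsepF : ∀ a ∈ Fi, ∀ c ∈ Fi, a ≠ c → δ / 2 ≤ dist a c := by
      intro a ha c hc hac
      exact hsepE a (Finset.mem_filter.mp ha).1 c (Finset.mem_filter.mp hc).1 hac
    have hcount := sphere_count hd P hP Fi (half_pos hδ)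
      (by positivity : (0:ℝ) ≤ 2 ^ (i + 1) / b ^ j) x hsepF hballF
    -- simplify the count bound
    have hbjm : b ^ (j + m) = b ^ j * b ^ m := pow_add b j m
    have hXeq : 12 * ((2:ℝ) ^ (i + 1) / b ^ j) / (δ / 2) + 7
        = 24 * 2 ^ (i + 1) * b ^ m / γ + 7 := by
      rw [hδdef, hbjm]
      field_simp
      ring
    have h2b1 : (1:ℝ) ≤ 2 ^ (i + 1) * b ^ m := by
      have h21 : (1:ℝ) ≤ 2 ^ (i + 1) := one_le_pow₀ (by norm_num)
      nlinarith
    have hXle : 12 * ((2:ℝ) ^ (i + 1) / b ^ j) / (δ / 2) + 7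
        ≤ C₁ * (2 ^ (i + 1) * b ^ m) := by
      rw [hXeq, hC₁]
      have h1 : 24 * (2:ℝ) ^ (i + 1) * b ^ m / γ = 24 / γ * (2 ^ (i + 1) * b ^ m) := by
        field_simp
      rw [h1]
      nlinarith [div_pos (by norm_num : (0:ℝ) < 24) hγ]
    have hXnn : (0:ℝ) ≤ 12 * ((2:ℝ) ^ (i + 1) / b ^ j) / (δ / 2) + 7 := by positivity
    have hcount2 : (Fi.card : ℝ) ≤ (P.card : ℝ) * (C₁ * (2 ^ (i + 1) * b ^ m)) ^ n := by
      calc (Fi.card : ℝ) ≤ P.card * (12 * ((2:ℝ) ^ (i + 1) / b ^ j) / (δ / 2) + 7) ^ n :=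
            hcount
        _ ≤ (P.card : ℝ) * (C₁ * (2 ^ (i + 1) * b ^ m)) ^ n := by
            apply mul_le_mul_of_nonneg_left _ (Nat.cast_nonneg _)
            exact pow_le_pow_left₀ hXnn hXle n
    have hsplit : (C₁ * ((2:ℝ) ^ (i + 1) * b ^ m)) ^ n
        = (2 * C₁ * b ^ m) ^ n * ((2:ℝ) ^ i) ^ n := by
      rw [← mul_pow]
      congr 1
      rw [pow_succ]
      ring
    have hpowid : ((2:ℝ) ^ i) ^ n * ((2:ℝ) ^ i) ^ (-((n:ℝ) + κ)) = ρ₀ ^ i := by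
      have h2i0 : (0:ℝ) < (2:ℝ) ^ i := by positivity
      rw [← Real.rpow_natCast ((2:ℝ) ^ i) n, ← Real.rpow_add h2i0]
      have he : (n:ℝ) + -((n:ℝ) + κ) = -κ := by ring
      rw [he, ← Real.rpow_natCast (2:ℝ) i, ← Real.rpow_mul (by norm_num : (0:ℝ) ≤ 2),
        mul_comm ((i:ℝ)) (-κ), Real.rpow_mul (by norm_num : (0:ℝ) ≤ 2), hρ₀,
        Real.rpow_natCast]
    have htnn : (0:ℝ) ≤ ((2:ℝ) ^ i) ^ (-((n:ℝ) + κ)) := Real.rpow_nonneg (by positivity) _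
    calc ∑ η ∈ Fi, (1 + b ^ j * gdist x η) ^ (-((d : ℝ) - 1 + κ))
        ≤ Fi.card • (((2:ℝ) ^ i) ^ (-((n:ℝ) + κ))) := Finset.sum_le_card_nsmul Fi _ _ hterm
      _ = (Fi.card : ℝ) * (((2:ℝ) ^ i) ^ (-((n:ℝ) + κ))) := nsmul_eq_mul _ _
      _ ≤ ((P.card : ℝ) * (C₁ * (2 ^ (i + 1) * b ^ m)) ^ n)
            * (((2:ℝ) ^ i) ^ (-((n:ℝ) + κ))) := mul_le_mul_of_nonneg_right hcount2 htnn
      _ = K * ρ₀ ^ i := by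
          rw [hsplit, hK, ← hpowid]
          ring
  have hgeom : ∑ i ∈ I, ρ₀ ^ i ≤ 4 / κ := by
    set N := I.sup id + 1 with hN
    have hIsub : I ⊆ Finset.range N := by
      intro i hi
      rw [Finset.mem_range, hN]
      exact Nat.lt_succ_of_le (Finset.le_sup (f := id) hi)
    have h1 : ∑ i ∈ I, ρ₀ ^ i ≤ ∑ i ∈ Finset.range N, ρ₀ ^ i :=
      Finset.sum_le_sum_of_subset_of_nonneg hIsub (fun i _ _ => pow_nonneg hρ₀0 i)
    have hden : 0 < 1 - ρ₀ := by linarith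
    have h2 : ∑ i ∈ Finset.range N, ρ₀ ^ i ≤ 1 / (1 - ρ₀) := by
      rw [geom_sum_eq hρ₀1.ne N]
      have heq2 : (ρ₀ ^ N - 1) / (ρ₀ - 1) = (1 - ρ₀ ^ N) / (1 - ρ₀) := by
        rw [← neg_div_neg_eq]
        ring_nf
      rw [heq2]
      exact (div_le_div_iff_of_pos_right hden).mpr (by nlinarith [pow_nonneg hρ₀0 N])
    have hlog2u : Real.log 2 ≤ 1 := by
      have h := Real.log_le_sub_one_of_pos (by norm_num : (0:ℝ) < 2)
      linarith
    have hlog2l : (1:ℝ) / 2 ≤ Real.log 2 := by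
      have h := Real.log_two_gt_d9
      linarith
    set t : ℝ := κ * Real.log 2 with ht
    have ht0 : 0 < t := mul_pos hκ (by linarith)
    have ht1 : t ≤ 1 := by nlinarith
    have h1t : (0:ℝ) < 1 + t := by linarith
    have hρ₀exp : ρ₀ = Real.exp (-t) := by
      rw [hρ₀, Real.rpow_def_of_pos (by norm_num : (0:ℝ) < 2)]
      rw [ht]
      ring_nf
    have hexp : Real.exp (-t) ≤ 1 / (1 + t) := by
      rw [Real.exp_neg, one_div]
      exact inv_anti₀ h1t (by linarith [Real.add_one_le_exp t])
    have hρ₀le : ρ₀ ≤ 1 / (1 + t) := hρ₀exp ▸ hexp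
    have hρ₀b : κ / 4 ≤ 1 - ρ₀ := by
      have h3 : 1 - 1 / (1 + t) = t / (1 + t) := by field_simp; ring
      have h4 : t / 2 ≤ t / (1 + t) :=
        div_le_div_of_nonneg_left ht0.le h1t (by linarith)
      have h5 : κ / 4 ≤ t / 2 := by
        rw [ht]
        nlinarith [mul_nonneg hκ.le (by linarith : (0:ℝ) ≤ Real.log 2 - 1 / 2)]
      linarith
    have hfin : 1 / (1 - ρ₀) ≤ 4 / κ := by
      rw [div_le_div_iff₀ hden hκ]
      linarith
    calc ∑ i ∈ I, ρ₀ ^ i ≤ 1 / (1 - ρ₀) := le_trans h1 h2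
      _ ≤ 4 / κ := hfin
  have hlast : K * (4 / κ)
      = ((P.card : ℝ) * (2 * C₁) ^ n * 4 / κ) * b ^ (m * n) := by
    rw [hK, mul_pow (2 * C₁) (b ^ m) n, ← pow_mul]
    field_simp
  calc ∑ η ∈ Z, (1 + b ^ j * gdist x η) ^ (-((d : ℝ) - 1 + κ))
      = ∑ i ∈ I, ∑ η ∈ Z.filter (fun η => fib η = i),
          (1 + b ^ j * gdist x η) ^ (-((d : ℝ) - 1 + κ)) := hsum
    _ ≤ ∑ i ∈ I, K * ρ₀ ^ i := Finset.sum_le_sum hfiber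
    _ = K * ∑ i ∈ I, ρ₀ ^ i := by rw [Finset.mul_sum]
    _ ≤ K * (4 / κ) := mul_le_mul_of_nonneg_left hgeom hKpos
    _ = ((P.card : ℝ) * (2 * C₁) ^ n * 4 / κ) * b ^ (m * n) := hlast
    _ ≤ (((P.card : ℝ) + 1) * (2 * C₁) ^ n * 4 / κ) * b ^ (m * n) := by
        have hbmn : (0:ℝ) < b ^ (m * n) := pow_pos hb0 _
        have h2C : (0:ℝ) ≤ (2 * C₁) ^ n := by positivity
        apply mul_le_mul_of_nonneg_right _ hbmn.le
        apply (div_le_div_iff_of_pos_right hκ).mpr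
        apply mul_le_mul_of_nonneg_right _ (by norm_num : (0:ℝ) ≤ 4)
        exact mul_le_mul_of_nonneg_right (by linarith) h2C
end

section
/- Let K > (d-1)/2, M > d-1, b > 1, and let X = ∪_{n≥0} X_n where X_n is a maximal γb^{-n}-net on S^{d-1}. Define N_ξ = b^j for ξ ∈ X_j and ω_{ξ,η} = (min{N_ξ,N_η}/max{N_ξ,N_η})^{K+(d-1)/2} · (1 + min{N_ξ,N_η}·ρ(ξ,η))^{-M}. Then sup_{ξ∈X} ∑_{ζ∈X} ω_{ξ,ζ} ≤ c for a constant c depending only on d, γ, b, K, M. -/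
open MeasureTheory Real

namespace AdrAux

open Finset Module
open scoped ENNReal NNReal

abbrev Sph (d : ℕ) := Metric.sphere (0 : EuclideanSpace ℝ (Fin d)) 1

variable {d : ℕ}

lemma sph_norm (x : Sph d) : ‖(x : EuclideanSpace ℝ (Fin d))‖ = 1 :=
  mem_sphere_zero_iff_norm.mp x.2

lemma inner_mem (x y : Sph d) :
    (-1 : ℝ) ≤ (inner ℝ (x : EuclideanSpace ℝ (Fin d)) (y : EuclideanSpace ℝ (Fin d)) : ℝ) ∧
    (inner ℝ (x : EuclideanSpace ℝ (Fin d)) (y : EuclideanSpace ℝ (Fin d)) : ℝ) ≤ 1 := by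
  have h := abs_real_inner_le_norm (x : EuclideanSpace ℝ (Fin d)) (y : EuclideanSpace ℝ (Fin d))
  rw [sph_norm, sph_norm, mul_one] at h
  exact abs_le.mp h

lemma cos_gdist (x y : Sph d) :
    Real.cos (gdist x y)
      = (inner ℝ (x : EuclideanSpace ℝ (Fin d)) (y : EuclideanSpace ℝ (Fin d)) : ℝ) :=
  Real.cos_arccos (inner_mem x y).1 (inner_mem x y).2

lemma gdist_nonneg (x y : Sph d) : 0 ≤ gdist x y := Real.arccos_nonneg _

lemma gdist_le_pi (x y : Sph d) : gdist x y ≤ π := Real.arccos_le_pi _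

lemma chord_sq (x y : Sph d) :
    ‖(x : EuclideanSpace ℝ (Fin d)) - (y : EuclideanSpace ℝ (Fin d))‖ ^ 2
      = 2 - 2 * Real.cos (gdist x y) := by
  rw [norm_sub_sq_real, sph_norm, sph_norm, cos_gdist]
  ring

lemma chord_lower (x y : Sph d) :
    2 / π * gdist x y ≤ ‖(x : EuclideanSpace ℝ (Fin d)) - (y : EuclideanSpace ℝ (Fin d))‖ := by
  have hθ0 := gdist_nonneg x y
  have hθπ := gdist_le_pi x y
  have hπ := Real.pi_pos
  have hcos := Real.cos_le_one_sub_mul_cos_sq (x := gdist x y) (by rwa [abs_of_nonneg hθ0])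
  have h2 : (2 / π * gdist x y) ^ 2 ≤
      ‖(x : EuclideanSpace ℝ (Fin d)) - (y : EuclideanSpace ℝ (Fin d))‖ ^ 2 := by
    rw [chord_sq]
    have he : (2 / π * gdist x y) ^ 2 = 2 * (2 / π ^ 2 * (gdist x y) ^ 2) := by
      field_simp
    rw [he]
    nlinarith [hcos]
  have h1 : 0 ≤ 2 / π * gdist x y := by positivity
  calc 2 / π * gdist x y = Real.sqrt ((2 / π * gdist x y) ^ 2) := (Real.sqrt_sq h1).symm
    _ ≤ Real.sqrt (‖(x : EuclideanSpace ℝ (Fin d)) - (y : EuclideanSpace ℝ (Fin d))‖ ^ 2) :=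
        Real.sqrt_le_sqrt h2
    _ = _ := Real.sqrt_sq (norm_nonneg _)

lemma abs_cos_sub_cos_le (a b : ℝ) : |Real.cos a - Real.cos b| ≤ |a - b| := by
  rw [Real.cos_sub_cos]
  have h1 : |Real.sin ((a - b) / 2)| ≤ |(a - b) / 2| := Real.abs_sin_le_abs
  have h2 : |Real.sin ((a + b) / 2)| ≤ 1 := Real.abs_sin_le_one _
  have h3 : |(a - b) / 2| = |a - b| / 2 := by rw [abs_div]; norm_num
  calc |(-2) * Real.sin ((a + b) / 2) * Real.sin ((a - b) / 2)|
      = 2 * |Real.sin ((a + b) / 2)| * |Real.sin ((a - b) / 2)| := by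
        rw [abs_mul, abs_mul, abs_neg]; norm_num
    _ ≤ 2 * 1 * (|a - b| / 2) := by
        apply mul_le_mul _ (h3 ▸ h1) (abs_nonneg _) (by norm_num)
        nlinarith [h2]
    _ = |a - b| := by ring

lemma abs_sin_sub_sin_le (a b : ℝ) : |Real.sin a - Real.sin b| ≤ |a - b| := by
  rw [Real.sin_sub_sin]
  have h1 : |Real.sin ((a - b) / 2)| ≤ |(a - b) / 2| := Real.abs_sin_le_abs
  have h2 : |Real.cos ((a + b) / 2)| ≤ 1 := Real.abs_cos_le_one _
  have h3 : |(a - b) / 2| = |a - b| / 2 := by rw [abs_div]; norm_num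
  calc |2 * Real.sin ((a - b) / 2) * Real.cos ((a + b) / 2)|
      = 2 * |Real.sin ((a - b) / 2)| * |Real.cos ((a + b) / 2)| := by
        rw [abs_mul, abs_mul]; norm_num
    _ ≤ 2 * (|a - b| / 2) * 1 := by
        apply mul_le_mul _ h2 (abs_nonneg _) (by positivity)
        nlinarith [h1, h3 ▸ h1]
    _ = |a - b| := by ring

/-- Sub of powers bound: `x^m - y^m ≤ m x^{m-1} (x-y)` for `0 ≤ y ≤ x`. -/
lemma pow_sub_pow_le {y x : ℝ} (hy : 0 ≤ y) (hxy : y ≤ x) (m : ℕ) :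
    x ^ m - y ^ m ≤ m * x ^ (m - 1) * (x - y) := by
  induction m with
  | zero => simp
  | succ k ih =>
    have hx : 0 ≤ x := hy.trans hxy
    rcases Nat.eq_zero_or_pos k with rfl | hk
    · simp
    · have hk1 : k - 1 + 1 = k := by omega
      have e1 : x ^ (k - 1) * x = x ^ k := by rw [← pow_succ, hk1]
      have hyk : y ^ k ≤ x ^ k := pow_le_pow_left₀ hy hxy k
      have h2 : x * (x ^ k - y ^ k) ≤ x * ((k : ℝ) * x ^ (k - 1) * (x - y)) :=
        mul_le_mul_of_nonneg_left ih hx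
      have h3 : x * ((k : ℝ) * x ^ (k - 1) * (x - y)) = (k : ℝ) * (x ^ (k - 1) * x) * (x - y) := by
        ring
      rw [h3, e1] at h2
      have h4 : y ^ k * (x - y) ≤ x ^ k * (x - y) :=
        mul_le_mul_of_nonneg_right hyk (by linarith)
      have h5 : x ^ (k + 1) - y ^ (k + 1) = x * (x ^ k - y ^ k) + y ^ k * (x - y) := by
        rw [pow_succ, pow_succ]; ring
      have h6 : (↑(k + 1) : ℝ) * x ^ (k + 1 - 1) * (x - y)
          = (k : ℝ) * x ^ k * (x - y) + x ^ k * (x - y) := by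
        have e : k + 1 - 1 = k := rfl
        rw [e]
        push_cast
        ring
      rw [h5, h6]
      linarith

/-- Volume-packing bound in Euclidean space: `σ`-separated points in the annulus
`u - w ≤ ‖x‖ ≤ u + w`. -/
lemma packing {m : ℕ} (hm : 1 ≤ m) {σ u w : ℝ} (hσ : 0 < σ) (hu : 0 ≤ u) (hw : 0 ≤ w)
    (T : Finset (EuclideanSpace ℝ (Fin m)))
    (sep : ∀ x ∈ T, ∀ y ∈ T, x ≠ y → σ ≤ dist x y)
    (hub : ∀ x ∈ T, ‖x‖ ≤ u + w) (hlb : ∀ x ∈ T, u - w ≤ ‖x‖) :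
    (T.card : ℝ) * (σ / 2) ^ m ≤ m * (u + w + σ / 2) ^ (m - 1) * (2 * w + σ) := by
  classical
  have hr0 : (0 : ℝ) < σ / 2 := by positivity
  set r : ℝ := σ / 2 with hrdef
  set R : ℝ := u + w + r with hRdef
  set r' : ℝ := max (u - w - r) 0 with hr'def
  have hr'0 : 0 ≤ r' := le_max_right _ _
  have hR0 : 0 ≤ R := by positivity
  have hr'R : r' ≤ R := max_le (by show u - w - r ≤ u + w + r; linarith) hR0
  haveI : Nontrivial (EuclideanSpace ℝ (Fin m)) :=
    nontrivial_of_finrank_pos (R := ℝ) (by rw [finrank_euclideanSpace_fin]; omega)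
  have hrank : finrank ℝ (EuclideanSpace ℝ (Fin m)) = m := finrank_euclideanSpace_fin
  set V := volume (Metric.ball (0 : EuclideanSpace ℝ (Fin m)) 1) with hVdef
  have hV0 : V ≠ 0 := (Metric.measure_ball_pos _ _ one_pos).ne'
  have hVt : V ≠ ⊤ := measure_ball_lt_top.ne
  have hA_sub : ∀ x ∈ T, Metric.ball x r ⊆
      Metric.closedBall (0 : EuclideanSpace ℝ (Fin m)) R \ Metric.ball 0 r' := by
    intro x hx p hp
    have hpx : ‖p - x‖ < r := by rwa [Metric.mem_ball, dist_eq_norm] at hp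
    have hub' := hub x hx
    have hlb' := hlb x hx
    have habs1 : ‖p‖ - ‖x‖ ≤ ‖p - x‖ := norm_sub_norm_le p x
    have habs2 : ‖x‖ - ‖p‖ ≤ ‖p - x‖ := by
      have := norm_sub_norm_le x p
      rwa [norm_sub_rev] at this
    constructor
    · rw [Metric.mem_closedBall, dist_zero_right]
      show ‖p‖ ≤ u + w + r; linarith
    · intro hpb
      rw [Metric.mem_ball, dist_zero_right] at hpb
      have h1 : u - w - r ≤ ‖p‖ := by linarith
      have h2 : r' ≤ ‖p‖ := max_le h1 (norm_nonneg p)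
      linarith
  have hdisj : (↑T : Set (EuclideanSpace ℝ (Fin m))).PairwiseDisjoint
      (fun x => Metric.ball x r) := by
    intro x hx y hy hxy
    exact Metric.ball_disjoint_ball (by
      have := sep x hx y hy hxy
      show r + r ≤ dist x y
      rw [hrdef]; linarith)
  have hUnion : volume (⋃ x ∈ T, Metric.ball x r)
      = (T.card : ℝ≥0∞) * (ENNReal.ofReal (r ^ m) * V) := by
    rw [measure_biUnion_finset hdisj (fun x _ => measurableSet_ball)]
    rw [Finset.sum_congr rfl
      (fun x _ => by rw [Measure.addHaar_ball volume x hr0.le, hrank]), Finset.sum_const,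
      nsmul_eq_mul]
  have hball' : volume (Metric.ball (0 : EuclideanSpace ℝ (Fin m)) r')
      = ENNReal.ofReal (r' ^ m) * V := by
    rw [Measure.addHaar_ball volume _ hr'0, hrank]
  have hcball : volume (Metric.closedBall (0 : EuclideanSpace ℝ (Fin m)) R)
      = ENNReal.ofReal (R ^ m) * V := by
    rw [Measure.addHaar_closedBall volume _ hR0, hrank]
  have hdisj2 : Disjoint (⋃ x ∈ T, Metric.ball x r)
      (Metric.ball (0 : EuclideanSpace ℝ (Fin m)) r') := by
    rw [Set.disjoint_left]
    intro p hp hp'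
    simp only [Set.mem_iUnion] at hp
    obtain ⟨x, hx, hpx⟩ := hp
    exact (hA_sub x hx hpx).2 hp'
  have hsub2 : (⋃ x ∈ T, Metric.ball x r) ∪ Metric.ball (0 : EuclideanSpace ℝ (Fin m)) r'
      ⊆ Metric.closedBall (0 : EuclideanSpace ℝ (Fin m)) R := by
    apply Set.union_subset
    · exact Set.iUnion₂_subset fun x hx => (hA_sub x hx).trans Set.diff_subset
    · exact Metric.ball_subset_closedBall.trans (Metric.closedBall_subset_closedBall hr'R)
  have hmeas : (T.card : ℝ≥0∞) * (ENNReal.ofReal (r ^ m) * V) + ENNReal.ofReal (r' ^ m) * V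
      ≤ ENNReal.ofReal (R ^ m) * V := by
    rw [← hUnion, ← hball', ← hcball, ← measure_union hdisj2 measurableSet_ball]
    exact measure_mono hsub2
  have hreal : (T.card : ℝ) * r ^ m + r' ^ m ≤ R ^ m := by
    have e1 : (T.card : ℝ≥0∞) * (ENNReal.ofReal (r ^ m) * V) + ENNReal.ofReal (r' ^ m) * V
        = ENNReal.ofReal ((T.card : ℝ) * r ^ m + r' ^ m) * V := by
      rw [ENNReal.ofReal_add (by positivity) (by positivity),
        ENNReal.ofReal_mul (by positivity), ENNReal.ofReal_natCast, add_mul, mul_assoc]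
    rw [e1] at hmeas
    have h2 := (ENNReal.mul_le_mul_iff_left hV0 hVt).mp hmeas
    exact (ENNReal.ofReal_le_ofReal_iff (by positivity)).mp h2
  have hpow := pow_sub_pow_le hr'0 hr'R m
  have hReq : R = u + w + σ / 2 := by rw [hRdef, hrdef]
  have hRr' : R - r' ≤ 2 * w + σ := by
    rcases le_or_gt 0 (u - w - σ / 2) with hcase | hcase
    · have hr'eq : r' = u - w - σ / 2 := by
        rw [hr'def, hrdef]; exact max_eq_left hcase
      rw [hReq, hr'eq]; linarith
    · have hr'eq : r' = 0 := by
        rw [hr'def, hrdef]; exact max_eq_right hcase.le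
      rw [hReq, hr'eq]; linarith
  calc (T.card : ℝ) * (σ / 2) ^ m ≤ R ^ m - r' ^ m := by
        have hpos : 0 ≤ r' ^ m := by positivity
        rw [← hrdef]; linarith
    _ ≤ m * R ^ (m - 1) * (R - r') := hpow
    _ ≤ m * (u + w + σ / 2) ^ (m - 1) * (2 * w + σ) := by
        rw [← hReq]
        exact mul_le_mul_of_nonneg_left hRr' (by positivity)

/-- Counting points of a `δ`-separated set on the sphere in the geodesic band
`[k δ/10, (k+1) δ/10]` around `ξ`. -/
lemma band_card (hd : 2 ≤ d) (ξ : Sph d) {δ : ℝ} (hδ : 0 < δ)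
    (B : Finset (Sph d))
    (sep : ∀ z ∈ B, ∀ z' ∈ B, z ≠ z' → δ ≤ gdist z z') (k : ℕ)
    (hband : ∀ z ∈ B, (k : ℝ) * (δ / 10) ≤ gdist ξ z ∧ gdist ξ z ≤ ((k : ℝ) + 1) * (δ / 10)) :
    (B.card : ℝ) ≤ ((d - 1 : ℕ) : ℝ) * 6 ^ (d - 1) * ((k : ℝ) + 1) ^ (d - 2) := by
  classical
  rcases B.eq_empty_or_nonempty with rfl | ⟨z₀, hz₀⟩
  · simp only [Finset.card_empty, Nat.cast_zero]
    positivity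
  set h : ℝ := δ / 10 with hhdef
  have hh0 : 0 < h := by positivity
  have hkh0 : (0 : ℝ) ≤ (k : ℝ) * h := by positivity
  have hkhπ : (k : ℝ) * h ≤ π := le_trans (hband z₀ hz₀).1 (gdist_le_pi _ _)
  have hξ1 : ‖(ξ : EuclideanSpace ℝ (Fin d))‖ = 1 := sph_norm ξ
  have hξ0 : (ξ : EuclideanSpace ℝ (Fin d)) ≠ 0 := by
    intro hc
    rw [hc, norm_zero] at hξ1
    norm_num at hξ1
  have hrank : finrank ℝ ((ℝ ∙ (ξ : EuclideanSpace ℝ (Fin d)))ᗮ) = d - 1 := by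
    have h2 := Submodule.finrank_add_finrank_orthogonal (K := (ℝ ∙ (ξ : EuclideanSpace ℝ (Fin d))))
    rw [finrank_span_singleton hξ0, finrank_euclideanSpace_fin] at h2
    omega
  have hinner : ∀ z : Sph d,
      (inner ℝ (ξ : EuclideanSpace ℝ (Fin d)) (z : EuclideanSpace ℝ (Fin d)) : ℝ)
        = Real.cos (gdist ξ z) := fun z => (cos_gdist ξ z).symm
  have hinner' : ∀ z : Sph d,
      (inner ℝ (z : EuclideanSpace ℝ (Fin d)) (ξ : EuclideanSpace ℝ (Fin d)) : ℝ)
        = Real.cos (gdist ξ z) := fun z => by rw [real_inner_comm]; exact hinner z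
  have memF : ∀ z : Sph d,
      ((z : EuclideanSpace ℝ (Fin d))
        - (inner ℝ (ξ : EuclideanSpace ℝ (Fin d)) (z : EuclideanSpace ℝ (Fin d)) : ℝ)
            • (ξ : EuclideanSpace ℝ (Fin d))) ∈ (ℝ ∙ (ξ : EuclideanSpace ℝ (Fin d)))ᗮ := by
    intro z
    rw [Submodule.mem_orthogonal_singleton_iff_inner_right, inner_sub_right,
      real_inner_smul_right, real_inner_self_eq_norm_sq, hξ1]
    ring
  let e0 := (stdOrthonormalBasis ℝ ((ℝ ∙ (ξ : EuclideanSpace ℝ (Fin d)))ᗮ)).repr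
  let re : EuclideanSpace ℝ (Fin (finrank ℝ ((ℝ ∙ (ξ : EuclideanSpace ℝ (Fin d)))ᗮ)))
      ≃ₗᵢ[ℝ] EuclideanSpace ℝ (Fin (d - 1)) :=
    LinearIsometryEquiv.piLpCongrLeft 2 ℝ ℝ (finCongr hrank)
  set φ : Sph d → EuclideanSpace ℝ (Fin (d - 1)) := fun z => re (e0 ⟨_, memF z⟩) with hφdef
  have hyn : ∀ z : Sph d,
      ‖(z : EuclideanSpace ℝ (Fin d))
        - (inner ℝ (ξ : EuclideanSpace ℝ (Fin d)) (z : EuclideanSpace ℝ (Fin d)) : ℝ)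
            • (ξ : EuclideanSpace ℝ (Fin d))‖ = Real.sin (gdist ξ z) := by
    intro z
    have hsq : ‖(z : EuclideanSpace ℝ (Fin d))
        - (inner ℝ (ξ : EuclideanSpace ℝ (Fin d)) (z : EuclideanSpace ℝ (Fin d)) : ℝ)
            • (ξ : EuclideanSpace ℝ (Fin d))‖ ^ 2 = Real.sin (gdist ξ z) ^ 2 := by
      rw [norm_sub_sq_real, real_inner_smul_right, norm_smul, sph_norm, hξ1,
        Real.norm_eq_abs, hinner z, hinner' z, Real.sin_sq, mul_one, sq_abs]
      ring
    have h1 : 0 ≤ Real.sin (gdist ξ z) :=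
      Real.sin_nonneg_of_nonneg_of_le_pi (gdist_nonneg ξ z) (gdist_le_pi ξ z)
    exact (pow_left_inj₀ (norm_nonneg _) h1 two_ne_zero).mp hsq
  have hφnorm : ∀ z : Sph d, ‖φ z‖ = Real.sin (gdist ξ z) := by
    intro z
    rw [show φ z = re (e0 ⟨_, memF z⟩) from rfl, re.norm_map, e0.norm_map, Submodule.coe_norm]
    exact hyn z
  have hφdist : ∀ z z' : Sph d, dist (φ z) (φ z')
      = ‖((z : EuclideanSpace ℝ (Fin d))
            - (inner ℝ (ξ : EuclideanSpace ℝ (Fin d)) (z : EuclideanSpace ℝ (Fin d)) : ℝ)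
              • (ξ : EuclideanSpace ℝ (Fin d)))
          - ((z' : EuclideanSpace ℝ (Fin d))
            - (inner ℝ (ξ : EuclideanSpace ℝ (Fin d)) (z' : EuclideanSpace ℝ (Fin d)) : ℝ)
              • (ξ : EuclideanSpace ℝ (Fin d)))‖ := by
    intro z z'
    rw [show φ z = re (e0 ⟨_, memF z⟩) from rfl, show φ z' = re (e0 ⟨_, memF z'⟩) from rfl,
      re.dist_map, e0.dist_map, Subtype.dist_eq, dist_eq_norm]
  have hpyth : ∀ z z' : Sph d,
      ‖(z : EuclideanSpace ℝ (Fin d)) - (z' : EuclideanSpace ℝ (Fin d))‖ ^ 2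
        = ((inner ℝ (ξ : EuclideanSpace ℝ (Fin d)) (z : EuclideanSpace ℝ (Fin d)) : ℝ)
            - (inner ℝ (ξ : EuclideanSpace ℝ (Fin d)) (z' : EuclideanSpace ℝ (Fin d)) : ℝ)) ^ 2
          + dist (φ z) (φ z') ^ 2 := by
    intro z z'
    have hdec : (z : EuclideanSpace ℝ (Fin d)) - (z' : EuclideanSpace ℝ (Fin d))
        = ((inner ℝ (ξ : EuclideanSpace ℝ (Fin d)) (z : EuclideanSpace ℝ (Fin d)) : ℝ)
            - (inner ℝ (ξ : EuclideanSpace ℝ (Fin d)) (z' : EuclideanSpace ℝ (Fin d)) : ℝ))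
              • (ξ : EuclideanSpace ℝ (Fin d))
          + (((z : EuclideanSpace ℝ (Fin d))
              - (inner ℝ (ξ : EuclideanSpace ℝ (Fin d)) (z : EuclideanSpace ℝ (Fin d)) : ℝ)
                • (ξ : EuclideanSpace ℝ (Fin d)))
            - ((z' : EuclideanSpace ℝ (Fin d))
              - (inner ℝ (ξ : EuclideanSpace ℝ (Fin d)) (z' : EuclideanSpace ℝ (Fin d)) : ℝ)
                • (ξ : EuclideanSpace ℝ (Fin d)))) := by
      rw [sub_smul]
      abel
    have hio : (inner ℝ
        (((inner ℝ (ξ : EuclideanSpace ℝ (Fin d)) (z : EuclideanSpace ℝ (Fin d)) : ℝ)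
            - (inner ℝ (ξ : EuclideanSpace ℝ (Fin d)) (z' : EuclideanSpace ℝ (Fin d)) : ℝ))
              • (ξ : EuclideanSpace ℝ (Fin d)))
        (((z : EuclideanSpace ℝ (Fin d))
              - (inner ℝ (ξ : EuclideanSpace ℝ (Fin d)) (z : EuclideanSpace ℝ (Fin d)) : ℝ)
                • (ξ : EuclideanSpace ℝ (Fin d)))
            - ((z' : EuclideanSpace ℝ (Fin d))
              - (inner ℝ (ξ : EuclideanSpace ℝ (Fin d)) (z' : EuclideanSpace ℝ (Fin d)) : ℝ)
                • (ξ : EuclideanSpace ℝ (Fin d)))) : ℝ) = 0 := by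
      rw [real_inner_smul_left, inner_sub_right]
      have h1 := Submodule.mem_orthogonal_singleton_iff_inner_right.mp (memF z)
      have h2 := Submodule.mem_orthogonal_singleton_iff_inner_right.mp (memF z')
      rw [h1, h2]
      ring
    rw [hdec, norm_add_sq_real, hio, hφdist z z', norm_smul, Real.norm_eq_abs, hξ1, mul_one,
      sq_abs]
    ring
  have hsepφ : ∀ z ∈ B, ∀ z' ∈ B, z ≠ z' → δ / 3 ≤ dist (φ z) (φ z') := by
    intro z hz z' hz' hne
    have hch : δ / 2 ≤ ‖(z : EuclideanSpace ℝ (Fin d)) - (z' : EuclideanSpace ℝ (Fin d))‖ := by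
      have h1 := chord_lower z z'
      have h2 := sep z hz z' hz' hne
      have hπ4 : π ≤ 4 := Real.pi_le_four
      have hπ0 := Real.pi_pos
      have h3 : 2 / π * δ ≤ 2 / π * gdist z z' :=
        mul_le_mul_of_nonneg_left h2 (by positivity)
      have h5 : (1:ℝ)/2 ≤ 2/π := by
        rw [div_le_div_iff₀ (by norm_num) hπ0]; linarith
      have h4 : δ / 2 ≤ 2 / π * δ := by
        calc δ / 2 = 1/2 * δ := by ring
          _ ≤ 2/π * δ := mul_le_mul_of_nonneg_right h5 hδ.le
      linarith
    have hcos : |(inner ℝ (ξ : EuclideanSpace ℝ (Fin d)) (z : EuclideanSpace ℝ (Fin d)) : ℝ)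
        - (inner ℝ (ξ : EuclideanSpace ℝ (Fin d)) (z' : EuclideanSpace ℝ (Fin d)) : ℝ)| ≤ h := by
      rw [hinner z, hinner z']
      have h1 := (hband z hz).1
      have h2 := (hband z hz).2
      have h3 := (hband z' hz').1
      have h4 := (hband z' hz').2
      calc |Real.cos (gdist ξ z) - Real.cos (gdist ξ z')| ≤ |gdist ξ z - gdist ξ z'| :=
            abs_cos_sub_cos_le _ _
        _ ≤ h := by
            rw [abs_le]
            constructor <;> linarith
    have hsq : (δ / 3) ^ 2 ≤ dist (φ z) (φ z') ^ 2 := by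
      have hp := hpyth z z'
      have habs : ((inner ℝ (ξ : EuclideanSpace ℝ (Fin d)) (z : EuclideanSpace ℝ (Fin d)) : ℝ)
          - (inner ℝ (ξ : EuclideanSpace ℝ (Fin d)) (z' : EuclideanSpace ℝ (Fin d)) : ℝ)) ^ 2
            ≤ h ^ 2 := by
        rw [← sq_abs]
        exact pow_le_pow_left₀ (abs_nonneg _) hcos 2
      have hch2 : (δ / 2) ^ 2 ≤
          ‖(z : EuclideanSpace ℝ (Fin d)) - (z' : EuclideanSpace ℝ (Fin d))‖ ^ 2 :=
        pow_le_pow_left₀ (by positivity) hch 2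
      have hh2 : h ^ 2 = δ ^ 2 / 100 := by rw [hhdef]; ring
      nlinarith [hp, habs, hch2]
    calc δ / 3 = Real.sqrt ((δ / 3) ^ 2) := (Real.sqrt_sq (by positivity)).symm
      _ ≤ Real.sqrt (dist (φ z) (φ z') ^ 2) := Real.sqrt_le_sqrt hsq
      _ = dist (φ z) (φ z') := Real.sqrt_sq dist_nonneg
  have hinj : Set.InjOn φ ↑B := by
    intro z hz z' hz' heq
    by_contra hne
    have := hsepφ z hz z' hz' hne
    rw [heq, dist_self] at this
    linarith
  set T : Finset (EuclideanSpace ℝ (Fin (d - 1))) := B.image φ with hTdef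
  have hcardT : T.card = B.card := Finset.card_image_of_injOn hinj
  have hsin0 : 0 ≤ Real.sin ((k : ℝ) * h) := Real.sin_nonneg_of_nonneg_of_le_pi hkh0 hkhπ
  have hbounds : ∀ x ∈ T, Real.sin ((k : ℝ) * h) - h ≤ ‖x‖ ∧
      ‖x‖ ≤ Real.sin ((k : ℝ) * h) + h := by
    intro x hx
    obtain ⟨z, hz, rfl⟩ := Finset.mem_image.mp hx
    rw [hφnorm z]
    have h1 := (hband z hz).1
    have h2 := (hband z hz).2
    have habs : |Real.sin (gdist ξ z) - Real.sin ((k : ℝ) * h)| ≤ h := by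
      calc |Real.sin (gdist ξ z) - Real.sin ((k : ℝ) * h)| ≤ |gdist ξ z - (k : ℝ) * h| :=
            abs_sin_sub_sin_le _ _
        _ ≤ h := by
            rw [abs_le]
            constructor <;> linarith
    rw [abs_le] at habs
    constructor <;> linarith [habs.1, habs.2]
  have hm1 : 1 ≤ d - 1 := by omega
  have hpack := packing hm1 (by positivity : (0:ℝ) < δ / 3) hsin0 hh0.le T
    (by
      intro x hx y hy hxy
      obtain ⟨z, hz, rfl⟩ := Finset.mem_image.mp hx
      obtain ⟨z', hz', rfl⟩ := Finset.mem_image.mp hy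
      have hne : z ≠ z' := fun hc => hxy (by rw [hc])
      exact hsepφ z hz z' hz' hne)
    (fun x hx => (hbounds x hx).2) (fun x hx => (hbounds x hx).1)
  rw [hcardT] at hpack
  have hklh : Real.sin ((k : ℝ) * h) ≤ (k : ℝ) * h := Real.sin_le hkh0
  have e1 : Real.sin ((k : ℝ) * h) + h + δ / 3 / 2 ≤ ((k : ℝ) + 1) * δ := by
    have hmono : (k : ℝ) * h ≤ (k : ℝ) * δ := by
      apply mul_le_mul_of_nonneg_left _ (Nat.cast_nonneg k)
      rw [hhdef]; linarith
    have hexp : ((k : ℝ) + 1) * δ = (k : ℝ) * δ + δ := by ring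
    rw [hexp, hhdef] at *
    linarith
  have e2 : 2 * h + δ / 3 ≤ δ := by rw [hhdef]; linarith
  have hmain : (B.card : ℝ) * (δ / 3 / 2) ^ (d - 1)
      ≤ ((d - 1 : ℕ) : ℝ) * (((k : ℝ) + 1) * δ) ^ (d - 1 - 1) * δ := by
    calc (B.card : ℝ) * (δ / 3 / 2) ^ (d - 1)
        ≤ ((d - 1 : ℕ) : ℝ) * (Real.sin ((k : ℝ) * h) + h + δ / 3 / 2) ^ (d - 1 - 1)
            * (2 * h + δ / 3) := hpack
      _ ≤ ((d - 1 : ℕ) : ℝ) * (((k : ℝ) + 1) * δ) ^ (d - 1 - 1) * δ := by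
          apply mul_le_mul
          · apply mul_le_mul_of_nonneg_left _ (Nat.cast_nonneg _)
            apply pow_le_pow_left₀ (by positivity) e1
          · exact e2
          · positivity
          · positivity
  have h63 : δ / 3 / 2 = δ / 6 := by ring
  rw [h63] at hmain
  have hd2eq : d - 1 - 1 = d - 2 := by omega
  rw [hd2eq] at hmain
  have hmm1 : d - 2 + 1 = d - 1 := by omega
  have hfinal : (B.card : ℝ) * (δ / 6) ^ (d - 1)
      ≤ (((d - 1 : ℕ) : ℝ) * 6 ^ (d - 1) * ((k : ℝ) + 1) ^ (d - 2)) * (δ / 6) ^ (d - 1) := by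
    have hrw : (((d - 1 : ℕ) : ℝ) * 6 ^ (d - 1) * ((k : ℝ) + 1) ^ (d - 2)) * (δ / 6) ^ (d - 1)
        = ((d - 1 : ℕ) : ℝ) * (((k : ℝ) + 1) * δ) ^ (d - 2) * δ := by
      rw [div_pow, mul_pow]
      rw [← hmm1, pow_succ, pow_succ]
      have h6 : (6 : ℝ) ^ (d - 2) ≠ 0 := by positivity
      field_simp
    calc (B.card : ℝ) * (δ / 6) ^ (d - 1)
        ≤ ((d - 1 : ℕ) : ℝ) * (((k : ℝ) + 1) * δ) ^ (d - 2) * δ := hmain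
      _ = _ := hrw.symm
  exact le_of_mul_le_mul_right hfinal (by positivity)

/-- Telescoping step: `(j+1)^{-μ} (μ-1) ≤ j^{1-μ} - (j+1)^{1-μ}`. -/
lemma tele {μ : ℝ} (hμ : 1 < μ) (j : ℕ) (hj : 1 ≤ j) :
    ((j : ℝ) + 1) ^ (-μ) * (μ - 1) ≤ (j : ℝ) ^ (1 - μ) - ((j : ℝ) + 1) ^ (1 - μ) := by
  have hx1 : (1 : ℝ) ≤ (j : ℝ) := by exact_mod_cast hj
  set x : ℝ := (j : ℝ) with hxdef
  have hx0 : (0 : ℝ) < x := by linarith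
  have hx10 : (0 : ℝ) < x + 1 := by linarith
  have hlog : 1 / (x + 1) ≤ Real.log (x + 1) - Real.log x := by
    have h := Real.log_le_sub_one_of_pos (show (0:ℝ) < x / (x + 1) by positivity)
    rw [Real.log_div hx0.ne' hx10.ne'] at h
    have he : x / (x + 1) - 1 = -(1 / (x + 1)) := by field_simp; ring
    rw [he] at h
    linarith
  have hexp : 1 + (μ - 1) / (x + 1) ≤ ((x + 1) / x) ^ (μ - 1) := by
    rw [Real.rpow_def_of_pos (by positivity), Real.log_div hx10.ne' hx0.ne']
    have h3 : (μ - 1) / (x + 1) + 1 ≤ Real.exp ((μ - 1) / (x + 1)) := Real.add_one_le_exp _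
    have h4 : Real.exp ((μ - 1) / (x + 1))
        ≤ Real.exp ((Real.log (x + 1) - Real.log x) * (μ - 1)) := by
      apply Real.exp_le_exp.mpr
      calc (μ - 1) / (x + 1) = 1 / (x + 1) * (μ - 1) := by ring
        _ ≤ (Real.log (x + 1) - Real.log x) * (μ - 1) :=
            mul_le_mul_of_nonneg_right hlog (by linarith)
    linarith
  have hpos : (0 : ℝ) < (x + 1) ^ (1 - μ) := Real.rpow_pos_of_pos hx10 _
  have h3 : (x + 1) ^ (1 - μ) * ((x + 1) / x) ^ (μ - 1) = x ^ (1 - μ) := by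
    rw [Real.div_rpow hx10.le hx0.le]
    rw [show (1 : ℝ) - μ = -(μ - 1) by ring, Real.rpow_neg hx10.le, Real.rpow_neg hx0.le]
    have hp1 : (0:ℝ) < (x + 1) ^ (μ - 1) := Real.rpow_pos_of_pos hx10 _
    have hp2 : (0:ℝ) < x ^ (μ - 1) := Real.rpow_pos_of_pos hx0 _
    field_simp
  have key : (x + 1) ^ (1 - μ) * (1 + (μ - 1) / (x + 1)) ≤ x ^ (1 - μ) := by
    calc (x + 1) ^ (1 - μ) * (1 + (μ - 1) / (x + 1))
        ≤ (x + 1) ^ (1 - μ) * ((x + 1) / x) ^ (μ - 1) :=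
          mul_le_mul_of_nonneg_left hexp hpos.le
      _ = x ^ (1 - μ) := h3
  have h4 : (x + 1) ^ ((1:ℝ) - μ) = (x + 1) ^ (-μ) * (x + 1) := by
    rw [show (1:ℝ) - μ = -μ + 1 by ring, Real.rpow_add hx10, Real.rpow_one]
  have expand : (x + 1) ^ ((1:ℝ) - μ) * (1 + (μ - 1) / (x + 1))
      = (x + 1) ^ ((1:ℝ) - μ) + (x + 1) ^ (-μ) * (μ - 1) := by
    rw [h4]
    field_simp
  rw [expand] at key
  linarith

/-- `∑_{j<J} (j+1)^{-μ} ≤ 1 + 1/(μ-1)` for `μ > 1`. -/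
lemma sumInv {μ : ℝ} (hμ : 1 < μ) (J : ℕ) :
    ∑ j ∈ Finset.range J, ((j : ℝ) + 1) ^ (-μ) ≤ 1 + 1 / (μ - 1) := by
  have hμ1 : (0:ℝ) < μ - 1 := by linarith
  rcases Nat.eq_zero_or_pos J with rfl | hJ
  · simp only [Finset.range_zero, Finset.sum_empty]
    positivity
  obtain ⟨n, rfl⟩ : ∃ n, J = n + 1 := ⟨J - 1, by omega⟩
  rw [Finset.sum_range_succ']
  set f : ℕ → ℝ := fun i => ((i : ℝ) + 1) ^ ((1:ℝ) - μ) with hfdef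
  have hzero : (((0 : ℕ) : ℝ) + 1) ^ (-μ) = 1 := by
    norm_num
  have hstep : ∀ i ∈ Finset.range n,
      (((i + 1 : ℕ) : ℝ) + 1) ^ (-μ) ≤ 1 / (μ - 1) * (f i - f (i + 1)) := by
    intro i _
    have ht := tele hμ (i + 1) (by omega)
    have hf1 : f i = ((i:ℝ) + 1) ^ ((1:ℝ) - μ) := rfl
    have hf2 : f (i+1) = (((i + 1 : ℕ) : ℝ) + 1) ^ ((1:ℝ) - μ) := rfl
    rw [hf1, hf2, one_div_mul_eq_div, le_div_iff₀ hμ1]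
    push_cast at ht ⊢
    linarith
  have htel : ∑ i ∈ Finset.range n, (1 / (μ - 1) * (f i - f (i + 1)))
      = 1 / (μ - 1) * (f 0 - f n) := by
    rw [← Finset.mul_sum, Finset.sum_range_sub' f n]
  calc (∑ i ∈ Finset.range n, (((i + 1 : ℕ) : ℝ) + 1) ^ (-μ)) + (((0 : ℕ) : ℝ) + 1) ^ (-μ)
      ≤ (∑ i ∈ Finset.range n, 1 / (μ - 1) * (f i - f (i + 1))) + 1 :=
        add_le_add (Finset.sum_le_sum hstep) (le_of_eq hzero)
    _ = 1 / (μ - 1) * (f 0 - f n) + 1 := by rw [htel]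
    _ ≤ 1 + 1 / (μ - 1) := by
        have h1 : (0 : ℝ) ≤ f n := Real.rpow_nonneg (by positivity) _
        have h0 : f 0 = 1 := by
          rw [hfdef]
          norm_num
        rw [h0]
        have h3 : 1 / (μ - 1) * (1 - f n) ≤ 1 / (μ - 1) * 1 :=
          mul_le_mul_of_nonneg_left (by linarith) (by positivity)
        linarith

lemma rpow_neg_anti {x y M : ℝ} (hx : 0 < x) (hxy : x ≤ y) (hM : 0 ≤ M) :
    y ^ (-M) ≤ x ^ (-M) := by
  rw [Real.rpow_neg (by linarith), Real.rpow_neg hx.le]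
  exact inv_anti₀ (Real.rpow_pos_of_pos hx M) (Real.rpow_le_rpow hx.le hxy hM)

/-- Grouped sum bound: `∑_{k<N} (1+ak)^{-μ} ≤ (1/a + 1)(1 + 1/(μ-1))`. -/
lemma sumGroup {a μ : ℝ} (ha : 0 < a) (hμ : 1 < μ) (N : ℕ) :
    ∑ k ∈ Finset.range N, (1 + a * (k : ℝ)) ^ (-μ) ≤ (1 / a + 1) * (1 + 1 / (μ - 1)) := by
  classical
  set κ : ℕ → ℕ := fun k => ⌊a * (k : ℝ)⌋₊ with hκdef
  have hterm : ∀ k : ℕ, (1 + a * (k : ℝ)) ^ (-μ) ≤ ((κ k : ℝ) + 1) ^ (-μ) := by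
    intro k
    apply rpow_neg_anti (by positivity) _ (by linarith)
    show (⌊a * (k : ℝ)⌋₊ : ℝ) + 1 ≤ 1 + a * (k : ℝ)
    have := Nat.floor_le (show (0:ℝ) ≤ a * (k : ℝ) by positivity)
    linarith
  set J : ℕ := ⌊a * (N : ℝ)⌋₊ + 1 with hJdef
  have hmaps : ∀ k ∈ Finset.range N, κ k ∈ Finset.range J := by
    intro k hk
    rw [Finset.mem_range] at hk ⊢
    have h1 : κ k ≤ ⌊a * (N : ℝ)⌋₊ := by
      apply Nat.floor_le_floor
      have : (k : ℝ) ≤ (N : ℝ) := by exact_mod_cast hk.le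
      nlinarith
    omega
  have hcard : ∀ jj : ℕ, (((Finset.range N).filter (fun k => κ k = jj)).card : ℝ)
      ≤ 1 / a + 1 := by
    intro jj
    set c₁ : ℕ := ⌈(jj : ℝ) / a⌉₊ with hc₁
    set t : ℕ := ⌊1 / a⌋₊ + 1 with htdef
    have hsubset : (Finset.range N).filter (fun k => κ k = jj) ⊆ Finset.Ico c₁ (c₁ + t) := by
      intro k hk
      obtain ⟨hkN, hkj⟩ := Finset.mem_filter.mp hk
      have hfl : ⌊a * (k : ℝ)⌋₊ = jj := hkj
      have h1 : (jj : ℝ) ≤ a * (k : ℝ) :=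
        (Nat.le_floor_iff (by positivity)).mp (le_of_eq hfl.symm)
      have h2 : a * (k : ℝ) < (jj : ℝ) + 1 := by
        have hlt := Nat.lt_floor_add_one (a * (k : ℝ))
        rw [hfl] at hlt
        exact_mod_cast hlt
      rw [Finset.mem_Ico]
      constructor
      · rw [hc₁]
        apply Nat.ceil_le.mpr
        rw [div_le_iff₀ ha]
        linarith [mul_comm a (k : ℝ), mul_comm (k:ℝ) a]
      · have h3 : (k : ℝ) < ((jj : ℝ) + 1) / a := by
          rw [lt_div_iff₀ ha]
          linarith [mul_comm a (k : ℝ), mul_comm (k:ℝ) a]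
        have h4 : (jj : ℝ) / a ≤ (c₁ : ℝ) := Nat.le_ceil _
        have h5 : (1 : ℝ) / a < (⌊1 / a⌋₊ : ℝ) + 1 := Nat.lt_floor_add_one _
        have hsplit : ((jj : ℝ) + 1) / a = (jj : ℝ) / a + 1 / a := by ring
        have h6 : (k : ℝ) < (c₁ : ℝ) + ((⌊1 / a⌋₊ : ℝ) + 1) := by
          rw [hsplit] at h3
          linarith
        have h7 : (k : ℝ) < ((c₁ + t : ℕ) : ℝ) := by
          rw [htdef]
          push_cast
          linarith
        exact_mod_cast h7
    have hc := Finset.card_le_card hsubset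
    rw [Nat.card_Ico, Nat.add_sub_cancel_left] at hc
    calc (((Finset.range N).filter (fun k => κ k = jj)).card : ℝ) ≤ (t : ℝ) := by
          exact_mod_cast hc
      _ ≤ 1 / a + 1 := by
          rw [htdef]
          push_cast
          have := Nat.floor_le (show (0:ℝ) ≤ 1 / a by positivity)
          linarith
  calc ∑ k ∈ Finset.range N, (1 + a * (k : ℝ)) ^ (-μ)
      ≤ ∑ k ∈ Finset.range N, ((κ k : ℝ) + 1) ^ (-μ) :=
        Finset.sum_le_sum (fun k _ => hterm k)
    _ = ∑ jj ∈ Finset.range J,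
          ∑ k ∈ (Finset.range N).filter (fun k => κ k = jj), ((κ k : ℝ) + 1) ^ (-μ) :=
        (Finset.sum_fiberwise_of_maps_to hmaps _).symm
    _ ≤ ∑ jj ∈ Finset.range J, (1 / a + 1) * ((jj : ℝ) + 1) ^ (-μ) := by
        apply Finset.sum_le_sum
        intro jj _
        have he : ∑ k ∈ (Finset.range N).filter (fun k => κ k = jj), ((κ k : ℝ) + 1) ^ (-μ)
            = (((Finset.range N).filter (fun k => κ k = jj)).card : ℝ)
                * ((jj : ℝ) + 1) ^ (-μ) := by
          rw [Finset.sum_congr rfl (fun k hk => by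
            rw [(Finset.mem_filter.mp hk).2]), Finset.sum_const, nsmul_eq_mul]
        rw [he]
        exact mul_le_mul_of_nonneg_right (hcard jj) (Real.rpow_nonneg (by positivity) _)
    _ = (1 / a + 1) * ∑ jj ∈ Finset.range J, ((jj : ℝ) + 1) ^ (-μ) := by
        rw [Finset.mul_sum]
    _ ≤ (1 / a + 1) * (1 + 1 / (μ - 1)) := by
        apply mul_le_mul_of_nonneg_left (sumInv hμ J) (by positivity)

/-- The row-sum bound for a single scale:
`∑_{ζ ∈ Z} (1 + L ρ(ξ,ζ))^{-M} ≤ C (1 + 1/(Lδ))^{d-1}`. -/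
lemma rowSum (hd : 2 ≤ d) {M : ℝ} (hM : (d : ℝ) - 1 < M) :
    ∃ C : ℝ, 0 < C ∧ ∀ (δ L : ℝ), 0 < δ → 0 < L →
      ∀ Z : Finset (Sph d), (∀ z ∈ Z, ∀ z' ∈ Z, z ≠ z' → δ ≤ gdist z z') →
      ∀ ξ : Sph d,
        ∑ ζ ∈ Z, (1 + L * gdist ξ ζ) ^ (-M) ≤ C * (1 + 1 / (L * δ)) ^ (d - 1) := by
  classical
  have hdR : (2 : ℝ) ≤ (d : ℝ) := by exact_mod_cast hd
  have hM0 : (0 : ℝ) ≤ M := by linarith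
  set μ : ℝ := M - ((d : ℝ) - 2) with hμdef
  have hμ : 1 < μ := by rw [hμdef]; linarith
  have hμ1 : (0:ℝ) < μ - 1 := by linarith
  set C₁ : ℝ := ((d - 1 : ℕ) : ℝ) * 6 ^ (d - 1) with hC₁def
  have hC₁0 : 0 < C₁ := by
    apply mul_pos _ (by positivity)
    have hh : 0 < d - 1 := by omega
    exact_mod_cast Nat.cast_pos.mpr hh
  have hfac : (0:ℝ) < 1 + 1 / (μ - 1) := by positivity
  refine ⟨C₁ * (1 + 1 / (μ - 1)) * 10 ^ (d - 1),
    mul_pos (mul_pos hC₁0 hfac) (by positivity), ?_⟩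
  intro δ L hδ hL Z sep ξ
  set h : ℝ := δ / 10 with hhdef
  have hh0 : 0 < h := by positivity
  set a : ℝ := L * h with hadef
  have ha0 : 0 < a := by positivity
  set κ : Sph d → ℕ := fun ζ => ⌊gdist ξ ζ / h⌋₊ with hκdef
  set K₀ : ℕ := ⌊π / h⌋₊ + 1 with hK₀def
  have hmaps : ∀ ζ ∈ Z, κ ζ ∈ Finset.range K₀ := by
    intro ζ _
    rw [Finset.mem_range, hK₀def]
    have h1 : κ ζ ≤ ⌊π / h⌋₊ := by
      apply Nat.floor_le_floor
      exact (div_le_div_iff_of_pos_right hh0).mpr (gdist_le_pi ξ ζ)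
    omega
  have hbandk : ∀ t : ℕ, ∀ ζ ∈ Z.filter (fun ζ => κ ζ = t),
      (t : ℝ) * h ≤ gdist ξ ζ ∧ gdist ξ ζ ≤ ((t : ℝ) + 1) * h := by
    intro t ζ hζ
    obtain ⟨hζZ, hζt⟩ := Finset.mem_filter.mp hζ
    have hfl : ⌊gdist ξ ζ / h⌋₊ = t := hζt
    constructor
    · have h1 : (t : ℝ) ≤ gdist ξ ζ / h :=
        (Nat.le_floor_iff (div_nonneg (gdist_nonneg ξ ζ) hh0.le)).mp (le_of_eq hfl.symm)
      rw [le_div_iff₀ hh0] at h1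
      linarith
    · have h2 := Nat.lt_floor_add_one (gdist ξ ζ / h)
      rw [hfl] at h2
      have h3 : gdist ξ ζ / h < (t : ℝ) + 1 := by exact_mod_cast h2
      rw [div_lt_iff₀ hh0] at h3
      linarith [mul_comm (gdist ξ ζ) h, mul_comm ((t:ℝ)+1) h]
  have hfiber : ∀ t : ℕ, ∑ ζ ∈ Z.filter (fun ζ => κ ζ = t), (1 + L * gdist ξ ζ) ^ (-M)
      ≤ (C₁ * (1 + 1 / a) ^ (d - 2)) * (1 + a * (t : ℝ)) ^ (-μ) := by
    intro t
    have hpos_at : (0:ℝ) < 1 + a * (t : ℝ) := by positivity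
    have hterm : ∀ ζ ∈ Z.filter (fun ζ => κ ζ = t),
        (1 + L * gdist ξ ζ) ^ (-M) ≤ (1 + a * (t : ℝ)) ^ (-M) := by
      intro ζ hζ
      apply rpow_neg_anti hpos_at _ hM0
      have h1 := (hbandk t ζ hζ).1
      have h2 : a * (t : ℝ) = L * ((t : ℝ) * h) := by rw [hadef]; ring
      rw [h2]
      have := mul_le_mul_of_nonneg_left h1 hL.le
      linarith
    have hcard : (((Z.filter (fun ζ => κ ζ = t))).card : ℝ)
        ≤ C₁ * ((t : ℝ) + 1) ^ (d - 2) :=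
      band_card hd ξ hδ _
        (fun z hz z' hz' hne => sep z (Finset.filter_subset _ _ hz)
          z' (Finset.filter_subset _ _ hz') hne) t (hbandk t)
    have hsplit : ((t : ℝ) + 1) ^ (d - 2) ≤ (1 + 1 / a) ^ (d - 2) * (1 + a * (t : ℝ)) ^ (d - 2) := by
      rw [← mul_pow]
      apply pow_le_pow_left₀ (by positivity)
      have hat : 1 / a * (a * (t : ℝ)) = (t : ℝ) := by field_simp
      have hexpand : (1 + 1 / a) * (1 + a * (t : ℝ))
          = 1 + a * (t : ℝ) + 1 / a + (t : ℝ) := by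
        have : (1 + 1 / a) * (1 + a * (t : ℝ))
            = 1 + a * (t : ℝ) + 1 / a + 1 / a * (a * (t : ℝ)) := by ring
        rw [this, hat]
      rw [hexpand]
      have h1 : (0:ℝ) ≤ a * (t : ℝ) := by positivity
      have h2 : (0:ℝ) ≤ 1 / a := by positivity
      linarith
    have hmerge : (1 + a * (t : ℝ)) ^ (d - 2 : ℕ) * (1 + a * (t : ℝ)) ^ (-M)
        = (1 + a * (t : ℝ)) ^ (-μ) := by
      rw [← Real.rpow_natCast (1 + a * (t : ℝ)) (d - 2), ← Real.rpow_add hpos_at]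
      congr 1
      have hcast : ((d - 2 : ℕ) : ℝ) = (d : ℝ) - 2 := by
        rw [Nat.cast_sub hd]; norm_num
      rw [hcast, hμdef]; ring
    calc ∑ ζ ∈ Z.filter (fun ζ => κ ζ = t), (1 + L * gdist ξ ζ) ^ (-M)
        ≤ ∑ ζ ∈ Z.filter (fun ζ => κ ζ = t), (1 + a * (t : ℝ)) ^ (-M) :=
          Finset.sum_le_sum hterm
      _ = (((Z.filter (fun ζ => κ ζ = t))).card : ℝ) * (1 + a * (t : ℝ)) ^ (-M) := by
          rw [Finset.sum_const, nsmul_eq_mul]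
      _ ≤ (C₁ * ((t : ℝ) + 1) ^ (d - 2)) * (1 + a * (t : ℝ)) ^ (-M) :=
          mul_le_mul_of_nonneg_right hcard (Real.rpow_nonneg hpos_at.le _)
      _ ≤ (C₁ * ((1 + 1 / a) ^ (d - 2) * (1 + a * (t : ℝ)) ^ (d - 2)))
            * (1 + a * (t : ℝ)) ^ (-M) := by
          apply mul_le_mul_of_nonneg_right _ (Real.rpow_nonneg hpos_at.le _)
          exact mul_le_mul_of_nonneg_left hsplit hC₁0.le
      _ = (C₁ * (1 + 1 / a) ^ (d - 2))
            * ((1 + a * (t : ℝ)) ^ (d - 2 : ℕ) * (1 + a * (t : ℝ)) ^ (-M)) := by ring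
      _ = (C₁ * (1 + 1 / a) ^ (d - 2)) * (1 + a * (t : ℝ)) ^ (-μ) := by rw [hmerge]
  have hstep2 : (1 + 1 / a) ^ (d - 2) * (1 / a + 1) = (1 + 1 / a) ^ (d - 1) := by
    have : d - 2 + 1 = d - 1 := by omega
    rw [add_comm (1/a) 1, ← pow_succ, this]
  have hinva : 1 / a = 10 / (L * δ) := by
    rw [hadef, hhdef]
    rw [div_eq_div_iff (by positivity) (by positivity)]
    ring
  have hbound : 1 + 1 / a ≤ 10 * (1 + 1 / (L * δ)) := by
    rw [hinva]
    have h1 : (0:ℝ) ≤ 1 / (L * δ) := by positivity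
    have h2 : 10 / (L * δ) = 10 * (1 / (L * δ)) := by ring
    rw [h2]
    linarith
  calc ∑ ζ ∈ Z, (1 + L * gdist ξ ζ) ^ (-M)
      = ∑ t ∈ Finset.range K₀, ∑ ζ ∈ Z.filter (fun ζ => κ ζ = t),
          (1 + L * gdist ξ ζ) ^ (-M) :=
        (Finset.sum_fiberwise_of_maps_to hmaps _).symm
    _ ≤ ∑ t ∈ Finset.range K₀, (C₁ * (1 + 1 / a) ^ (d - 2)) * (1 + a * (t : ℝ)) ^ (-μ) :=
        Finset.sum_le_sum (fun t _ => hfiber t)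
    _ = (C₁ * (1 + 1 / a) ^ (d - 2)) * ∑ t ∈ Finset.range K₀, (1 + a * (t : ℝ)) ^ (-μ) := by
        rw [Finset.mul_sum]
    _ ≤ (C₁ * (1 + 1 / a) ^ (d - 2)) * ((1 / a + 1) * (1 + 1 / (μ - 1))) := by
        apply mul_le_mul_of_nonneg_left (sumGroup ha0 hμ K₀) (by positivity)
    _ = (C₁ * (1 + 1 / (μ - 1))) * ((1 + 1 / a) ^ (d - 2) * (1 / a + 1)) := by ring
    _ = (C₁ * (1 + 1 / (μ - 1))) * (1 + 1 / a) ^ (d - 1) := by rw [hstep2]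
    _ ≤ (C₁ * (1 + 1 / (μ - 1))) * (10 ^ (d - 1) * (1 + 1 / (L * δ)) ^ (d - 1)) := by
        apply mul_le_mul_of_nonneg_left _ (mul_nonneg hC₁0.le hfac.le)
        calc (1 + 1 / a) ^ (d - 1) ≤ (10 * (1 + 1 / (L * δ))) ^ (d - 1) :=
              pow_le_pow_left₀ (by positivity) hbound _
          _ = 10 ^ (d - 1) * (1 + 1 / (L * δ)) ^ (d - 1) := mul_pow _ _ _
    _ = C₁ * (1 + 1 / (μ - 1)) * 10 ^ (d - 1) * (1 + 1 / (L * δ)) ^ (d - 1) := by ring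

end AdrAux

/-- Almost diagonal matrix row sums: for `K > (d-1)/2`, `M > d-1`, with
`N_ξ = b^j` for `ξ ∈ X_j` and
`ω_{ξ,ζ} = (min(N_ξ,N_ζ)/max(N_ξ,N_ζ))^{K+(d-1)/2} (1 + min(N_ξ,N_ζ) ρ(ξ,ζ))^{-M}`,
one has `sup_ξ ∑_{ζ ∈ X} ω_{ξ,ζ} ≤ c` with `c = c(d,γ,b,K,M)`. -/
theorem almost_diagonal_row_sum (d : ℕ) (hd : 2 ≤ d) (b γ K M : ℝ)
    (hb : 1 < b) (hγ : 0 < γ)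
    (hK : ((d : ℝ) - 1) / 2 < K) (hM : (d : ℝ) - 1 < M) :
    ∃ c : ℝ, 0 < c ∧
      ∀ X : ℕ → Finset (Metric.sphere (0 : EuclideanSpace ℝ (Fin d)) 1),
        (∀ n, IsMaximalNet (γ / b ^ n) (X n)) →
        ∀ j : ℕ, ∀ ξ ∈ X j,
          Summable (fun n : ℕ => ∑ ζ ∈ X n,
            (min (b ^ j) (b ^ n) / max (b ^ j) (b ^ n)) ^ (K + ((d : ℝ) - 1) / 2) *
              (1 + min (b ^ j) (b ^ n) * gdist ξ ζ) ^ (-M)) ∧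
          ∑' n : ℕ, (∑ ζ ∈ X n,
            (min (b ^ j) (b ^ n) / max (b ^ j) (b ^ n)) ^ (K + ((d : ℝ) - 1) / 2) *
              (1 + min (b ^ j) (b ^ n) * gdist ξ ζ) ^ (-M)) ≤ c := by
  classical
  obtain ⟨C, hC0, hC⟩ := AdrAux.rowSum hd hM
  have hb0 : (0:ℝ) < b := by linarith
  set α : ℝ := K + ((d : ℝ) - 1) / 2 with hαdef
  set β : ℝ := K - ((d : ℝ) - 1) / 2 with hβdef
  have hdR : (2:ℝ) ≤ (d:ℝ) := by exact_mod_cast hd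
  have hβ0 : 0 < β := by rw [hβdef]; linarith
  have hβα : β ≤ α := by rw [hαdef, hβdef]; linarith
  set q : ℝ := b ^ (-β) with hqdef
  have hq0 : 0 < q := Real.rpow_pos_of_pos hb0 _
  have hq1 : q < 1 := Real.rpow_lt_one_of_one_lt_of_neg hb (by linarith)
  set C₄ : ℝ := C * (1 + 1/γ) ^ (d - 1) with hC₄def
  have hC₄0 : 0 < C₄ := mul_pos hC0 (by positivity)
  have h2q : (0:ℝ) < 2 / (1 - q) := by
    apply div_pos (by norm_num)
    linarith
  refine ⟨C₄ * (2 / (1 - q)), mul_pos hC₄0 h2q, ?_⟩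
  intro X hX j ξ hξ
  have hq_pow : ∀ i : ℕ, ((b:ℝ) ^ i) ^ (-β) = q ^ i := by
    intro i
    rw [← Real.rpow_natCast b i, ← Real.rpow_mul hb0.le, hqdef,
      ← Real.rpow_natCast (b ^ (-β)) i, ← Real.rpow_mul hb0.le]
    congr 1
    ring
  set S : ℕ → ℝ := fun n => ∑ ζ ∈ X n,
      (min (b ^ j) (b ^ n) / max (b ^ j) (b ^ n)) ^ α *
        (1 + min (b ^ j) (b ^ n) * gdist ξ ζ) ^ (-M) with hSdef
  have hSnn : ∀ n, 0 ≤ S n := by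
    intro n
    apply Finset.sum_nonneg
    intro ζ _
    have hg := AdrAux.gdist_nonneg ξ ζ
    have hmin0 : (0:ℝ) ≤ min (b ^ j) (b ^ n) := le_min (by positivity) (by positivity)
    have hmax0 : (0:ℝ) < max (b ^ j) (b ^ n) := lt_max_of_lt_left (by positivity)
    exact mul_nonneg (Real.rpow_nonneg (div_nonneg hmin0 hmax0.le) _)
      (Real.rpow_nonneg (by nlinarith [mul_nonneg hmin0 hg]) _)
  have key : ∀ n, S n ≤ C₄ * (q ^ (n - j) * q ^ (j - n)) := by
    intro n
    have hδn : (0:ℝ) < γ / b ^ n := by positivity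
    have hnet := (hX n).1
    rcases le_total n j with hnj | hjn
    · -- n ≤ j
      have hple : (b:ℝ) ^ n ≤ b ^ j := pow_le_pow_right₀ hb.le hnj
      have hmin : min ((b:ℝ) ^ j) (b ^ n) = b ^ n := min_eq_right hple
      have hmax : max ((b:ℝ) ^ j) (b ^ n) = b ^ j := max_eq_left hple
      have hsum := hC (γ / b ^ n) (b ^ n) hδn (by positivity) (X n) hnet ξ
      have hLδ : (b:ℝ) ^ n * (γ / b ^ n) = γ := by field_simp
      rw [hLδ] at hsum
      have hSn : S n = ∑ ζ ∈ X n, ((b:ℝ) ^ n / b ^ j) ^ α *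
          (1 + (b:ℝ) ^ n * gdist ξ ζ) ^ (-M) :=
        Finset.sum_congr rfl (fun ζ _ => by rw [hmin, hmax])
      have hsnn : 0 ≤ ∑ ζ ∈ X n, (1 + (b:ℝ) ^ n * gdist ξ ζ) ^ (-M) := by
        apply Finset.sum_nonneg
        intro ζ _
        have hg := AdrAux.gdist_nonneg ξ ζ
        exact Real.rpow_nonneg (by nlinarith [mul_nonneg (by positivity : (0:ℝ) ≤ (b:ℝ)^n) hg]) _
      have hxpos : (0:ℝ) < (b:ℝ) ^ (j - n) := by positivity
      have hone_le : (1:ℝ) ≤ (b:ℝ) ^ (j - n) := one_le_pow₀ hb.le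
      have hfrac : (b:ℝ) ^ n / b ^ j = ((b:ℝ) ^ (j - n))⁻¹ := by
        have hbj : (b:ℝ) ^ j = b ^ n * b ^ (j - n) := by
          rw [← pow_add]; congr 1; omega
        rw [hbj]
        field_simp
      have hp_le : ((b:ℝ) ^ n / b ^ j) ^ α ≤ q ^ (j - n) := by
        calc ((b:ℝ) ^ n / b ^ j) ^ α = ((b:ℝ) ^ (j - n)) ^ (-α) := by
              rw [hfrac, Real.inv_rpow hxpos.le, ← Real.rpow_neg hxpos.le]
          _ ≤ ((b:ℝ) ^ (j - n)) ^ (-β) :=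
              Real.rpow_le_rpow_of_exponent_le hone_le (by linarith)
          _ = q ^ (j - n) := hq_pow (j - n)
      have hfin : S n ≤ q ^ (j - n) * C₄ := by
        rw [hSn, ← Finset.mul_sum]
        calc ((b:ℝ) ^ n / b ^ j) ^ α * ∑ ζ ∈ X n, (1 + (b:ℝ) ^ n * gdist ξ ζ) ^ (-M)
            ≤ q ^ (j - n) * ∑ ζ ∈ X n, (1 + (b:ℝ) ^ n * gdist ξ ζ) ^ (-M) :=
              mul_le_mul_of_nonneg_right hp_le hsnn
          _ ≤ q ^ (j - n) * C₄ := by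
              apply mul_le_mul_of_nonneg_left _ (pow_nonneg hq0.le _)
              exact le_trans hsum (le_of_eq hC₄def.symm)
      have hnj0 : n - j = 0 := by omega
      rw [hnj0, pow_zero, one_mul]
      linarith
    · -- j ≤ n
      have hple : (b:ℝ) ^ j ≤ b ^ n := pow_le_pow_right₀ hb.le hjn
      have hmin : min ((b:ℝ) ^ j) (b ^ n) = b ^ j := min_eq_left hple
      have hmax : max ((b:ℝ) ^ j) (b ^ n) = b ^ n := max_eq_right hple
      have hsum := hC (γ / b ^ n) (b ^ j) hδn (by positivity) (X n) hnet ξ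
      have hbn_split : (b:ℝ) ^ n = b ^ j * b ^ (n - j) := by
        rw [← pow_add]; congr 1; omega
      have hxpos : (0:ℝ) < (b:ℝ) ^ (n - j) := by positivity
      have hone_le : (1:ℝ) ≤ (b:ℝ) ^ (n - j) := one_le_pow₀ hb.le
      have hLδ : (b:ℝ) ^ j * (γ / b ^ n) = γ / b ^ (n - j) := by
        rw [hbn_split]
        field_simp
      have hgr : 1 + 1 / ((b:ℝ) ^ j * (γ / b ^ n)) ≤ (1 + 1/γ) * (b:ℝ) ^ (n - j) := by
        rw [hLδ]
        have h1 : 1 / (γ / (b:ℝ) ^ (n - j)) = (b:ℝ) ^ (n - j) / γ := by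
          rw [one_div_div]
        have hexp2 : (1 + 1/γ) * (b:ℝ) ^ (n - j) = (b:ℝ) ^ (n - j) + (b:ℝ) ^ (n - j) / γ := by
          field_simp
        rw [h1, hexp2]
        linarith
    -- sum bound
      have hsum2 : ∑ ζ ∈ X n, (1 + (b:ℝ) ^ j * gdist ξ ζ) ^ (-M)
          ≤ C₄ * ((b:ℝ) ^ (n - j)) ^ (d - 1 : ℕ) := by
        calc ∑ ζ ∈ X n, (1 + (b:ℝ) ^ j * gdist ξ ζ) ^ (-M)
            ≤ C * (1 + 1 / ((b:ℝ) ^ j * (γ / b ^ n))) ^ (d - 1) := hsum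
          _ ≤ C * ((1 + 1/γ) * (b:ℝ) ^ (n - j)) ^ (d - 1) := by
              apply mul_le_mul_of_nonneg_left _ hC0.le
              apply pow_le_pow_left₀ (by positivity) hgr
          _ = C₄ * ((b:ℝ) ^ (n - j)) ^ (d - 1 : ℕ) := by
              rw [hC₄def, mul_pow]
              ring
      have hSn : S n = ∑ ζ ∈ X n, ((b:ℝ) ^ j / b ^ n) ^ α *
          (1 + (b:ℝ) ^ j * gdist ξ ζ) ^ (-M) :=
        Finset.sum_congr rfl (fun ζ _ => by rw [hmin, hmax])
      have hp_eq : ((b:ℝ) ^ j / b ^ n) ^ α = ((b:ℝ) ^ (n - j)) ^ (-α) := by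
        have hfrac : (b:ℝ) ^ j / b ^ n = ((b:ℝ) ^ (n - j))⁻¹ := by
          rw [hbn_split]
          field_simp
        rw [hfrac, Real.inv_rpow hxpos.le, ← Real.rpow_neg hxpos.le]
      have hmerge : ((b:ℝ) ^ (n - j)) ^ (-α) * ((b:ℝ) ^ (n - j)) ^ (d - 1 : ℕ) = q ^ (n - j) := by
        rw [← Real.rpow_natCast ((b:ℝ) ^ (n - j)) (d - 1), ← Real.rpow_add hxpos]
        have hcast : ((d - 1 : ℕ) : ℝ) = (d : ℝ) - 1 := by
          rw [Nat.cast_sub (by omega)]; norm_num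
        rw [hcast]
        have hexpsum : -α + ((d:ℝ) - 1) = -β := by rw [hαdef, hβdef]; ring
        rw [hexpsum]
        exact hq_pow (n - j)
      have hfin : S n ≤ q ^ (n - j) * C₄ := by
        rw [hSn, ← Finset.mul_sum, hp_eq]
        calc ((b:ℝ) ^ (n - j)) ^ (-α) * ∑ ζ ∈ X n, (1 + (b:ℝ) ^ j * gdist ξ ζ) ^ (-M)
            ≤ ((b:ℝ) ^ (n - j)) ^ (-α) * (C₄ * ((b:ℝ) ^ (n - j)) ^ (d - 1 : ℕ)) :=
              mul_le_mul_of_nonneg_left hsum2 (Real.rpow_nonneg hxpos.le _)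
          _ = (((b:ℝ) ^ (n - j)) ^ (-α) * ((b:ℝ) ^ (n - j)) ^ (d - 1 : ℕ)) * C₄ := by ring
          _ = q ^ (n - j) * C₄ := by rw [hmerge]
      have hjn0 : j - n = 0 := by omega
      rw [hjn0, pow_zero, mul_one]
      linarith
  -- summability and tsum bound
  have hmaj : ∀ n : ℕ, q ^ (n - j) * q ^ (j - n) ≤ (q ^ j)⁻¹ * q ^ n := by
    intro n
    have h1 : q ^ (j - n) ≤ 1 := pow_le_one₀ hq0.le hq1.le
    have h2 : q ^ (n - j) ≤ q ^ n / q ^ j := by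
      rw [le_div_iff₀ (pow_pos hq0 j), ← pow_add]
      exact pow_le_pow_of_le_one hq0.le hq1.le (by omega)
    calc q ^ (n - j) * q ^ (j - n) ≤ q ^ (n - j) * 1 :=
          mul_le_mul_of_nonneg_left h1 (pow_nonneg hq0.le _)
      _ = q ^ (n - j) := by ring
      _ ≤ q ^ n / q ^ j := h2
      _ = (q ^ j)⁻¹ * q ^ n := by ring
  have hFs : Summable (fun n : ℕ => q ^ (n - j) * q ^ (j - n)) := by
    apply Summable.of_nonneg_of_le
      (fun n => mul_nonneg (pow_nonneg hq0.le _) (pow_nonneg hq0.le _)) hmaj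
    exact (summable_geometric_of_lt_one hq0.le hq1).mul_left _
  have hgS : Summable (fun n : ℕ => C₄ * (q ^ (n - j) * q ^ (j - n))) := hFs.mul_left _
  have hS_sum : Summable S := Summable.of_nonneg_of_le hSnn key hgS
  refine ⟨hS_sum, ?_⟩
  have hFbound : ∑' n : ℕ, (q ^ (n - j) * q ^ (j - n)) ≤ 2 / (1 - q) := by
    rw [← Summable.sum_add_tsum_nat_add j hFs]
    have hpart1 : ∑ i ∈ Finset.range j, q ^ (i - j) * q ^ (j - i) ≤ 1 / (1 - q) := by
      have h1 : ∀ i ∈ Finset.range j, q ^ (i - j) * q ^ (j - i) ≤ q ^ (j - i) := by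
        intro i hi
        rw [Finset.mem_range] at hi
        have hij : i - j = 0 := by omega
        rw [hij, pow_zero, one_mul]
      have h2 : ∑ i ∈ Finset.range j, q ^ (j - i) = ∑ i ∈ Finset.range j, q ^ (i + 1) := by
        rw [← Finset.sum_range_reflect (fun i => q ^ (i + 1)) j]
        apply Finset.sum_congr rfl
        intro i hi
        rw [Finset.mem_range] at hi
        congr 1
        omega
      have h3 : ∑ i ∈ Finset.range j, q ^ (i + 1) ≤ ∑ i ∈ Finset.range j, q ^ i :=
        Finset.sum_le_sum (fun i _ => pow_le_pow_of_le_one hq0.le hq1.le (by omega))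
      have h4 : ∑ i ∈ Finset.range j, q ^ i ≤ ∑' i : ℕ, q ^ i :=
        Summable.sum_le_tsum _ (fun i _ => pow_nonneg hq0.le i)
          (summable_geometric_of_lt_one hq0.le hq1)
      rw [tsum_geometric_of_lt_one hq0.le hq1] at h4
      have h5 : (1 - q)⁻¹ = 1 / (1 - q) := (one_div _).symm
      calc ∑ i ∈ Finset.range j, q ^ (i - j) * q ^ (j - i)
          ≤ ∑ i ∈ Finset.range j, q ^ (j - i) := Finset.sum_le_sum h1
        _ = ∑ i ∈ Finset.range j, q ^ (i + 1) := h2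
        _ ≤ ∑ i ∈ Finset.range j, q ^ i := h3
        _ ≤ (1 - q)⁻¹ := h4
        _ = 1 / (1 - q) := h5
    have hpart2 : ∑' i : ℕ, q ^ ((i + j) - j) * q ^ (j - (i + j)) = (1 - q)⁻¹ := by
      have hcong : ∀ i : ℕ, q ^ ((i + j) - j) * q ^ (j - (i + j)) = q ^ i := by
        intro i
        have e1 : (i + j) - j = i := by omega
        have e2 : j - (i + j) = 0 := by omega
        rw [e1, e2, pow_zero, mul_one]
      rw [tsum_congr hcong, tsum_geometric_of_lt_one hq0.le hq1]
    calc (∑ i ∈ Finset.range j, q ^ (i - j) * q ^ (j - i))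
          + ∑' i : ℕ, q ^ ((i + j) - j) * q ^ (j - (i + j))
        ≤ 1 / (1 - q) + (1 - q)⁻¹ := add_le_add hpart1 (le_of_eq hpart2)
      _ = 2 / (1 - q) := by rw [← one_div]; ring
  calc ∑' n : ℕ, S n ≤ ∑' n : ℕ, C₄ * (q ^ (n - j) * q ^ (j - n)) :=
        Summable.tsum_le_tsum key hS_sum hgS
    _ = C₄ * ∑' n : ℕ, (q ^ (n - j) * q ^ (j - n)) := tsum_mul_left
    _ ≤ C₄ * (2 / (1 - q)) := mul_le_mul_of_nonneg_left hFbound hC₄0.le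
end
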